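/- arXiv:1110.6821 — 3 statements merged into one kernel-verified Lean document; each statement's English description precedes it below -/
import Mathlib

section
/- If 𝔊 is an induced Hoffman subgraph of a Hoffman graph 𝔥, then λ_min(𝔊) ≥ λ_min(𝔥). In particular, if Γ is the slim subgraph of 𝔥 (the subgraph induced on all slim vertices), then the smallest adjacency eigenvalue of Γ is at least λ_min(𝔥). -/
attribute [local instance] Classical.propDecidable

open scoped RealInnerProductSpace

/-- A Hoffman graph: a graph together with a labeling of its vertices as fat or slim,
such that every fat vertex has a slim neighbor and fat vertices are pairwise nonadjacent. -/
structure HoffmanGraph (V : Type*) where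
  graph : SimpleGraph V
  IsFat : V → Prop
  fat_not_adj : ∀ {x y : V}, IsFat x → IsFat y → ¬ graph.Adj x y
  fat_slim_nbr : ∀ {x : V}, IsFat x → ∃ y : V, ¬ IsFat y ∧ graph.Adj x y

namespace HoffmanGraph

variable {V : Type*}

/-- A vertex is slim if it is not fat. -/
def IsSlim (H : HoffmanGraph V) (x : V) : Prop := ¬ H.IsFat x

/-- The type of slim vertices. -/
abbrev Slim (H : HoffmanGraph V) := {v : V // H.IsSlim v}

/-- The number of fat neighbors of a vertex. -/
noncomputable def fatDeg (H : HoffmanGraph V) (x : V) : ℕ :=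
  {f : V | H.IsFat f ∧ H.graph.Adj x f}.ncard

/-- The number of common fat neighbors of two vertices. -/
noncomputable def commonFat (H : HoffmanGraph V) (x y : V) : ℕ :=
  {f : V | H.IsFat f ∧ H.graph.Adj x f ∧ H.graph.Adj y f}.ncard

lemma commonFat_comm (H : HoffmanGraph V) (x y : V) :
    H.commonFat x y = H.commonFat y x := by
  unfold commonFat
  congr 1
  ext f
  simp only [Set.mem_setOf_eq]
  tauto

/-- A Hoffman graph is fat if every slim vertex has a fat neighbor. -/
def IsFatGraph (H : HoffmanGraph V) : Prop :=
  ∀ x, H.IsSlim x → ∃ f, H.IsFat f ∧ H.graph.Adj x f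

/-- A representation of norm `m`. -/
def IsRep (H : HoffmanGraph V) (m : ℝ) {E : Type*} [NormedAddCommGroup E]
    [InnerProductSpace ℝ E] (φ : V → E) : Prop :=
  (∀ x, H.IsSlim x → ⟪φ x, φ x⟫ = m) ∧
  (∀ x, H.IsFat x → ⟪φ x, φ x⟫ = 1) ∧
  (∀ x y, H.graph.Adj x y → ⟪φ x, φ y⟫ = 1) ∧
  (∀ x y, x ≠ y → ¬ H.graph.Adj x y → ⟪φ x, φ y⟫ = 0)

/-- A reduced representation of norm `m` (only the values on slim vertices matter). -/
def IsReducedRep (H : HoffmanGraph V) (m : ℝ) {E : Type*} [NormedAddCommGroup E]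
    [InnerProductSpace ℝ E] (ψ : V → E) : Prop :=
  (∀ x, H.IsSlim x → ⟪ψ x, ψ x⟫ = m - H.fatDeg x) ∧
  (∀ x y, H.IsSlim x → H.IsSlim y → H.graph.Adj x y → ⟪ψ x, ψ y⟫ = 1 - H.commonFat x y) ∧
  (∀ x y, H.IsSlim x → H.IsSlim y → x ≠ y → ¬ H.graph.Adj x y →
    ⟪ψ x, ψ y⟫ = - (H.commonFat x y : ℝ))

/-- The matrix B(𝔥) = A_s − C Cᵀ, indexed by the slim vertices. -/
noncomputable def matrixB (H : HoffmanGraph V) : Matrix H.Slim H.Slim ℝ :=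
  fun x y => (if H.graph.Adj x.1 y.1 then (1 : ℝ) else 0) - (H.commonFat x.1 y.1 : ℝ)

/-- The smallest eigenvalue of a Hoffman graph. -/
noncomputable def lambdaMin (H : HoffmanGraph V) [Fintype V] : ℝ :=
  sInf (spectrum ℝ H.matrixB)

/-- A subset of the vertices induces a Hoffman graph iff every fat vertex of it retains
a slim neighbor inside it. -/
def IsGoodSubset (H : HoffmanGraph V) (S : Set V) : Prop :=
  ∀ x ∈ S, H.IsFat x → ∃ y ∈ S, ¬ H.IsFat y ∧ H.graph.Adj x y

/-- The induced Hoffman subgraph on a good subset. -/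
def induce (H : HoffmanGraph V) (S : Set V) (hS : H.IsGoodSubset S) : HoffmanGraph S where
  graph := H.graph.induce S
  IsFat := fun x => H.IsFat x.1
  fat_not_adj := by
    intro x y hx hy hadj
    exact H.fat_not_adj hx hy hadj
  fat_slim_nbr := by
    rintro ⟨x, hxS⟩ hx
    obtain ⟨y, hyS, hy, hadj⟩ := hS x hxS hx
    exact ⟨⟨y, hyS⟩, hy, hadj⟩

/-- An (abstract) induced Hoffman subgraph relation between Hoffman graphs. -/
def IsInducedSubgraphOf {V₁ V₂ : Type*} (H₁ : HoffmanGraph V₁) (H₂ : HoffmanGraph V₂) : Prop :=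
  ∃ e : V₁ ↪ V₂, (∀ x y, H₂.graph.Adj (e x) (e y) ↔ H₁.graph.Adj x y) ∧
    (∀ x, H₂.IsFat (e x) ↔ H₁.IsFat x)

/-- Isomorphism of Hoffman graphs. -/
def IsIsoTo {V₁ V₂ : Type*} (H₁ : HoffmanGraph V₁) (H₂ : HoffmanGraph V₂) : Prop :=
  ∃ e : V₁ ≃ V₂, (∀ x y, H₂.graph.Adj (e x) (e y) ↔ H₁.graph.Adj x y) ∧
    (∀ x, H₂.IsFat (e x) ↔ H₁.IsFat x)

/-- `H` is the sum of its induced subgraphs on `W₁` and `W₂`. -/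
structure IsSum (H : HoffmanGraph V) (W₁ W₂ : Set V) : Prop where
  nonempty₁ : W₁.Nonempty
  nonempty₂ : W₂.Nonempty
  good₁ : H.IsGoodSubset W₁
  good₂ : H.IsGoodSubset W₂
  union_eq : W₁ ∪ W₂ = Set.univ
  slim_partition : ∀ v, H.IsSlim v → (v ∈ W₁ ↔ v ∉ W₂)
  fat_closed₁ : ∀ x ∈ W₁, H.IsSlim x → ∀ f, H.IsFat f → H.graph.Adj x f → f ∈ W₁
  fat_closed₂ : ∀ x ∈ W₂, H.IsSlim x → ∀ f, H.IsFat f → H.graph.Adj x f → f ∈ W₂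
  common_le : ∀ x ∈ W₁, ∀ y ∈ W₂, H.IsSlim x → H.IsSlim y → H.commonFat x y ≤ 1
  common_iff : ∀ x ∈ W₁, ∀ y ∈ W₂, H.IsSlim x → H.IsSlim y →
    (H.commonFat x y = 1 ↔ H.graph.Adj x y)

/-- `H` is decomposable if it is the sum of two nonempty induced Hoffman subgraphs. -/
def Decomposable (H : HoffmanGraph V) : Prop := ∃ W₁ W₂ : Set V, H.IsSum W₁ W₂

def Indecomposable (H : HoffmanGraph V) : Prop := ¬ H.Decomposable

/-- `H` is the sum of the family of its induced subgraphs on `W i`. -/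
structure IsSumFamily (H : HoffmanGraph V) {n : ℕ} (W : Fin n → Set V) : Prop where
  nonempty : ∀ i, (W i).Nonempty
  good : ∀ i, H.IsGoodSubset (W i)
  union_eq : ⋃ i, W i = Set.univ
  slim_mem_unique : ∀ v, H.IsSlim v → ∃! i, v ∈ W i
  fat_closed : ∀ i, ∀ x ∈ W i, H.IsSlim x → ∀ f, H.IsFat f → H.graph.Adj x f → f ∈ W i
  common_le : ∀ i j, i ≠ j → ∀ x ∈ W i, ∀ y ∈ W j, H.IsSlim x → H.IsSlim y →
    H.commonFat x y ≤ 1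
  common_iff : ∀ i j, i ≠ j → ∀ x ∈ W i, ∀ y ∈ W j, H.IsSlim x → H.IsSlim y →
    (H.commonFat x y = 1 ↔ H.graph.Adj x y)

/-- Attach a new fat vertex (the `none` vertex) adjacent exactly to the slim vertices in `S`. -/
def attachFat (H : HoffmanGraph V) (S : Set V) (hne : S.Nonempty)
    (hslim : ∀ v ∈ S, H.IsSlim v) : HoffmanGraph (Option V) where
  graph := {
    Adj := fun a b =>
      match a, b with
      | none, none => False
      | none, some v => v ∈ S
      | some v, none => v ∈ S
      | some u, some v => H.graph.Adj u v
    symm := by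
      refine ⟨?_⟩
      rintro (_|u) (_|v) h
      · exact h.elim
      · exact h
      · exact h
      · exact h.symm
    loopless := by
      refine ⟨?_⟩
      rintro (_|u) h
      · exact h.elim
      · exact H.graph.loopless.irrefl u h }
  IsFat := fun a => match a with | none => True | some v => H.IsFat v
  fat_not_adj := by
    rintro (_|u) (_|v) hu hv h
    · exact h.elim
    · exact (hslim v h) hv
    · exact (hslim u h) hu
    · exact H.fat_not_adj hu hv h
  fat_slim_nbr := by
    rintro (_|u) hu
    · obtain ⟨s, hs⟩ := hne
      exact ⟨some s, hslim s hs, hs⟩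
    · obtain ⟨y, hy, hadj⟩ := H.fat_slim_nbr hu
      exact ⟨some y, hy, hadj⟩

/-- `H` is `μ`-saturated: it has smallest eigenvalue at least `μ` and no fat vertex can be
attached while keeping the smallest eigenvalue at least `μ`. -/
def IsSaturated (H : HoffmanGraph V) [Fintype V] (μ : ℝ) : Prop :=
  μ ≤ H.lambdaMin ∧
  ∀ (S : Set V) (hne : S.Nonempty) (hslim : ∀ v ∈ S, H.IsSlim v),
    ¬ (μ ≤ (H.attachFat S hne hslim).lambdaMin)

/-- The special graph `S⁻(𝔥)`: slim vertices, adjacent when the inner product of their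
reduced representations is negative. -/
noncomputable def specialMinus (H : HoffmanGraph V) : SimpleGraph H.Slim where
  Adj x y := x ≠ y ∧
    ((H.graph.Adj x.1 y.1 ∧ (1 : ℝ) - (H.commonFat x.1 y.1 : ℝ) < 0) ∨
     (¬ H.graph.Adj x.1 y.1 ∧ -(H.commonFat x.1 y.1 : ℝ) < 0))
  symm := by
    refine ⟨?_⟩
    rintro x y ⟨hne, h⟩
    refine ⟨hne.symm, ?_⟩
    rw [H.commonFat_comm y.1 x.1]
    rcases h with ⟨ha, hl⟩ | ⟨ha, hl⟩
    · exact Or.inl ⟨ha.symm, hl⟩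
    · exact Or.inr ⟨fun hadj => ha hadj.symm, hl⟩
  loopless := ⟨fun x h => h.1 rfl⟩

/-- The special graph `S⁺(𝔥)`: slim vertices, adjacent when the inner product of their
reduced representations is positive. -/
noncomputable def specialPlus (H : HoffmanGraph V) : SimpleGraph H.Slim where
  Adj x y := x ≠ y ∧
    ((H.graph.Adj x.1 y.1 ∧ 0 < (1 : ℝ) - (H.commonFat x.1 y.1 : ℝ)) ∨
     (¬ H.graph.Adj x.1 y.1 ∧ 0 < -(H.commonFat x.1 y.1 : ℝ)))
  symm := by
    refine ⟨?_⟩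
    rintro x y ⟨hne, h⟩
    refine ⟨hne.symm, ?_⟩
    rw [H.commonFat_comm y.1 x.1]
    rcases h with ⟨ha, hl⟩ | ⟨ha, hl⟩
    · exact Or.inl ⟨ha.symm, hl⟩
    · exact Or.inr ⟨fun hadj => ha hadj.symm, hl⟩
  loopless := ⟨fun x h => h.1 rfl⟩

/-- The special graph `S(𝔥)`, the union of `S⁻(𝔥)` and `S⁺(𝔥)`. -/
noncomputable def special (H : HoffmanGraph V) : SimpleGraph H.Slim :=
  H.specialMinus ⊔ H.specialPlus

/-- `⟨S⟩_𝔥`: the set `S` together with all fat neighbors of its members. -/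
def closureSet (H : HoffmanGraph V) (S : Set V) : Set V :=
  S ∪ {f | H.IsFat f ∧ ∃ x ∈ S, H.graph.Adj x f}

/-- The Hoffman graph `𝔥^(t)` with one slim vertex (`none`) and `t` fat vertices. -/
def manyFat (t : ℕ) : HoffmanGraph (Option (Fin t)) where
  graph := {
    Adj := fun a b => (a = none ∧ b ≠ none) ∨ (a ≠ none ∧ b = none)
    symm := by
      refine ⟨?_⟩
      rintro a b (⟨h1, h2⟩ | ⟨h1, h2⟩)
      · exact Or.inr ⟨h2, h1⟩
      · exact Or.inl ⟨h2, h1⟩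
    loopless := by
      refine ⟨?_⟩
      rintro a (⟨h1, h2⟩ | ⟨h1, h2⟩)
      · exact h2 h1
      · exact h1 h2 }
  IsFat := fun a => a ≠ none
  fat_not_adj := by
    rintro a b ha hb (⟨h1, _⟩ | ⟨_, h1⟩)
    · exact ha h1
    · exact hb h1
  fat_slim_nbr := by
    intro a ha
    refine ⟨none, by simp, Or.inr ⟨ha, rfl⟩⟩

/-- An ordinary (slim) graph regarded as a Hoffman graph. -/
def ofSimple {W : Type*} (G : SimpleGraph W) : HoffmanGraph W where
  graph := G
  IsFat := fun _ => False
  fat_not_adj := by intro x y hx _ _; exact hx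
  fat_slim_nbr := by intro x hx; exact hx.elim

end HoffmanGraph
namespace HoffmanGraph

variable {V : Type*}

/-- The Hoffman graph obtained by replacing the fat vertices `f i` by slim cliques of
sizes `n i`, joining all neighbors of `f i` to all vertices of the `i`-th clique. -/
def blowup {k : ℕ} (H : HoffmanGraph V) (f : Fin k → V) (hf : ∀ i, H.IsFat (f i))
    (n : Fin k → ℕ) :
    HoffmanGraph ({v : V // v ∉ Set.range f} ⊕ (Σ i : Fin k, Fin (n i))) where
  graph := {
    Adj := fun a b =>
      match a, b with
      | .inl u, .inl v => H.graph.Adj u.1 v.1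
      | .inl u, .inr x => H.graph.Adj u.1 (f x.1)
      | .inr x, .inl v => H.graph.Adj (f x.1) v.1
      | .inr x, .inr y => x ≠ y ∧ x.1 = y.1
    symm := by
      refine ⟨?_⟩
      rintro (u|x) (v|y) h
      · exact h.symm
      · exact h.symm
      · exact h.symm
      · exact ⟨h.1.symm, h.2.symm⟩
    loopless := by
      refine ⟨?_⟩
      rintro (u|x) h
      · exact H.graph.loopless.irrefl _ h
      · exact h.1 rfl }
  IsFat := fun a => match a with | .inl u => H.IsFat u.1 | .inr _ => False
  fat_not_adj := by
    rintro (u|x) (v|y) hu hv h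
    · exact H.fat_not_adj hu hv h
    · exact hv
    · exact hu
    · exact hu
  fat_slim_nbr := by
    rintro (u|x) hu
    · obtain ⟨y, hy, hadj⟩ := H.fat_slim_nbr hu
      refine ⟨Sum.inl ⟨y, ?_⟩, hy, hadj⟩
      rintro ⟨i, rfl⟩
      exact hy (hf i)
    · exact hu.elim

/-- The slim graph obtained by replacing every fat vertex by a slim `n`-clique,
joining all neighbors of a fat vertex to all vertices of its clique. -/
def blowupAll (H : HoffmanGraph V) (n : ℕ) :
    HoffmanGraph (H.Slim ⊕ ({f : V // H.IsFat f} × Fin n)) where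
  graph := {
    Adj := fun a b =>
      match a, b with
      | .inl u, .inl v => H.graph.Adj u.1 v.1
      | .inl u, .inr x => H.graph.Adj u.1 x.1.1
      | .inr x, .inl v => H.graph.Adj x.1.1 v.1
      | .inr x, .inr y => x ≠ y ∧ x.1 = y.1
    symm := by
      refine ⟨?_⟩
      rintro (u|x) (v|y) h
      · exact h.symm
      · exact h.symm
      · exact h.symm
      · exact ⟨h.1.symm, h.2.symm⟩
    loopless := by
      refine ⟨?_⟩
      rintro (u|x) h
      · exact H.graph.loopless.irrefl _ h
      · exact h.1 rfl }
  IsFat := fun _ => False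
  fat_not_adj := by intro x y hx _; exact hx.elim
  fat_slim_nbr := by intro x hx; exact hx.elim

/-- The Hoffman graph of Example 4.2: slim vertices `ℤ/4ℤ` (the `inl`'s), fat vertices
`f_j` for `j ∈ ℤ/4ℤ` (the `inr`'s), with edges `{0,2}`, `{1,3}` and `{i, f_j}` for
`i = j` or `i = j + 1`. -/
def exampleA3tilde : HoffmanGraph (ZMod 4 ⊕ ZMod 4) where
  graph := {
    Adj := fun a b =>
      match a, b with
      | .inl i, .inl j => j = i + 2
      | .inl i, .inr j => i = j ∨ i = j + 1
      | .inr j, .inl i => i = j ∨ i = j + 1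
      | .inr _, .inr _ => False
    symm := by
      refine ⟨?_⟩
      have h4 : (2 : ZMod 4) + 2 = 0 := by decide
      rintro (i|i) (j|j) h
      · have h' : j = i + 2 := h
        subst h'
        show i = i + 2 + 2
        rw [add_assoc, h4, add_zero]
      · exact h
      · exact h
      · exact h.elim
    loopless := by
      refine ⟨?_⟩
      rintro (i|i) h
      · exact absurd (left_eq_add.mp h) (by decide)
      · exact h }
  IsFat := fun a => match a with | .inl _ => False | .inr _ => True
  fat_not_adj := by
    rintro (i|i) (j|j) hx hy h
    · exact hx
    · exact hx
    · exact hy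
    · exact h
  fat_slim_nbr := by
    rintro (i|i) hx
    · exact hx.elim
    · exact ⟨Sum.inl i, id, Or.inl rfl⟩

end HoffmanGraph

/-- The extended Dynkin graph `D̃₄`, i.e. the star `K_{1,4}`. -/
def tildeD4Graph : SimpleGraph (Fin 5) := SimpleGraph.fromRel (fun a _ => a = 0)

/-- The Dynkin graph `A_m`: the path on `m` vertices. -/
def dynkinA (m : ℕ) : SimpleGraph (Fin m) :=
  SimpleGraph.fromRel (fun i j => i.1 + 1 = j.1)

/-- The extended Dynkin graph `Ã_m`: the cycle on `m + 1` vertices. -/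
def tildeA (m : ℕ) : SimpleGraph (ZMod (m + 1)) :=
  SimpleGraph.fromRel (fun i j => i + 1 = j)

/-- The Dynkin graph `D_m`: the path `1 - 2 - ⋯ - (m-1)` with the extra vertex `0`
attached to the vertex `2`. -/
def dynkinD (m : ℕ) : SimpleGraph (Fin m) :=
  SimpleGraph.fromRel (fun i j => (1 ≤ i.1 ∧ i.1 + 1 = j.1) ∨ (i.1 = 0 ∧ j.1 = 2))

/-- The extended Dynkin graph `D̃_m` on `m + 1` vertices: the path `1 - 2 - ⋯ - (m-1)`
with the extra vertex `0` attached to `2` and the extra vertex `m` attached to `m - 2`. -/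
def tildeD (m : ℕ) : SimpleGraph (Fin (m + 1)) :=
  SimpleGraph.fromRel (fun i j =>
    (1 ≤ i.1 ∧ i.1 + 1 = j.1 ∧ j.1 ≤ m - 1) ∨ (i.1 = 0 ∧ j.1 = 2) ∨ (i.1 = m ∧ j.1 = m - 2))

open Matrix in
lemma aux_spectrum_eq {n : Type*} [Fintype n] [DecidableEq n] {A : Matrix n n ℝ}
    (hA : A.IsHermitian) : spectrum ℝ A = Set.range hA.eigenvalues := by
  have hdet : ∀ μ : ℝ, ((algebraMap ℝ (Matrix n n ℝ)) μ - A).det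
      = ∏ i, (μ - hA.eigenvalues i) := by
    intro μ
    set U : Matrix n n ℝ := (hA.eigenvectorUnitary : Matrix n n ℝ) with hU
    have hU1 : U * star U = 1 := Matrix.mem_unitaryGroup_iff.mp hA.eigenvectorUnitary.2
    have hU2 : star U * U = 1 := Matrix.mem_unitaryGroup_iff'.mp hA.eigenvectorUnitary.2
    have h1 : (algebraMap ℝ (Matrix n n ℝ)) μ - A
        = U * ((algebraMap ℝ (Matrix n n ℝ)) μ - diagonal (RCLike.ofReal ∘ hA.eigenvalues))
          * star U := by
      rw [Matrix.mul_sub, Matrix.sub_mul]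
      congr 1
      · rw [← Algebra.commutes μ U, mul_assoc, hU1, mul_one]
      · exact hA.spectral_theorem
    rw [h1, Matrix.det_mul, Matrix.det_mul, mul_comm, ← mul_assoc, ← Matrix.det_mul, hU2,
      Matrix.det_one, one_mul]
    rw [Matrix.algebraMap_eq_diagonal, Matrix.diagonal_sub, Matrix.det_diagonal]
    simp [RCLike.ofReal_real_eq_id]
  ext μ
  simp only [spectrum.mem_iff, Matrix.isUnit_iff_isUnit_det, isUnit_iff_ne_zero, not_not,
    hdet μ, Finset.prod_eq_zero_iff, Set.mem_range, sub_eq_zero]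
  constructor
  · rintro ⟨i, _, h⟩; exact ⟨i, h.symm⟩
  · rintro ⟨i, h⟩; exact ⟨i, Finset.mem_univ i, h.symm⟩

open Matrix in
lemma aux_rayleigh_decomp {n : Type*} [Fintype n] [DecidableEq n] {A : Matrix n n ℝ}
    (hA : A.IsHermitian) (v : n → ℝ) :
    ∃ c : n → ℝ, v ⬝ᵥ v = ∑ i, c i * c i ∧
      v ⬝ᵥ (A *ᵥ v) = ∑ i, hA.eigenvalues i * (c i * c i) := by
  set U : Matrix n n ℝ := (hA.eigenvectorUnitary : Matrix n n ℝ) with hUdef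
  have hsU : star U = Uᵀ := by
    ext i j; simp [Matrix.star_apply]
  have hU1 : U * Uᵀ = 1 := by
    rw [← hsU]; exact Matrix.mem_unitaryGroup_iff.mp hA.eigenvectorUnitary.2
  set c : n → ℝ := Uᵀ *ᵥ v with hc
  refine ⟨c, ?_, ?_⟩
  · calc v ⬝ᵥ v = (U *ᵥ (Uᵀ *ᵥ v)) ⬝ᵥ v := by rw [Matrix.mulVec_mulVec, hU1, Matrix.one_mulVec]
    _ = (c ᵥ* Uᵀ) ⬝ᵥ v := by rw [Matrix.vecMul_transpose, hc]
    _ = c ⬝ᵥ (Uᵀ *ᵥ v) := by rw [Matrix.dotProduct_mulVec]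
    _ = ∑ i, c i * c i := by rw [← hc]; rfl
  · have hco : RCLike.ofReal ∘ hA.eigenvalues = hA.eigenvalues := by
      funext i; simp [RCLike.ofReal_real_eq_id]
    have hA' : A = U * diagonal hA.eigenvalues * Uᵀ := by
      rw [← hsU, ← hco]; exact hA.spectral_theorem
    obtain ⟨ev, hev⟩ : ∃ ev : n → ℝ, hA.eigenvalues = ev := ⟨_, rfl⟩
    rw [hev] at hA' ⊢
    rw [hA', ← Matrix.mulVec_mulVec, ← Matrix.mulVec_mulVec, Matrix.dotProduct_mulVec,
      ← Matrix.mulVec_transpose, ← hc]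
    simp only [dotProduct, Matrix.mulVec_diagonal]
    exact Finset.sum_congr rfl fun i _ => by ring

open Matrix in
lemma aux_sInf_le {n : Type*} [Fintype n] [DecidableEq n] [Nonempty n] {A : Matrix n n ℝ}
    (hA : A.IsHermitian) (v : n → ℝ) :
    sInf (spectrum ℝ A) * (v ⬝ᵥ v) ≤ v ⬝ᵥ (A *ᵥ v) := by
  obtain ⟨c, h1, h2⟩ := aux_rayleigh_decomp hA v
  rw [h1, h2, Finset.mul_sum]
  refine Finset.sum_le_sum fun i _ => ?_
  have h3 : sInf (spectrum ℝ A) ≤ hA.eigenvalues i := by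
    refine csInf_le ?_ (hA.eigenvalues_mem_spectrum_real i)
    rw [aux_spectrum_eq hA]
    exact (Set.finite_range _).bddBelow
  exact mul_le_mul_of_nonneg_right h3 (mul_self_nonneg _)

open Matrix in
lemma aux_exists_unit {n : Type*} [Fintype n] [DecidableEq n] [Nonempty n] {A : Matrix n n ℝ}
    (hA : A.IsHermitian) :
    ∃ v : n → ℝ, v ⬝ᵥ v = 1 ∧ v ⬝ᵥ (A *ᵥ v) = sInf (spectrum ℝ A) := by
  obtain ⟨i₀, hi₀⟩ := Finite.exists_min hA.eigenvalues
  have hsinf : sInf (spectrum ℝ A) = hA.eigenvalues i₀ := by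
    refine le_antisymm (csInf_le ?_ (hA.eigenvalues_mem_spectrum_real i₀)) ?_
    · rw [aux_spectrum_eq hA]; exact (Set.finite_range _).bddBelow
    · refine le_csInf ⟨_, hA.eigenvalues_mem_spectrum_real i₀⟩ ?_
      rw [aux_spectrum_eq hA]
      rintro b ⟨i, rfl⟩
      exact hi₀ i
  have key : (⇑(hA.eigenvectorBasis i₀) : n → ℝ) ⬝ᵥ ⇑(hA.eigenvectorBasis i₀) = 1 := by
    have horth := orthonormal_iff_ite.mp hA.eigenvectorBasis.orthonormal i₀ i₀
    rw [EuclideanSpace.inner_eq_star_dotProduct] at horth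
    simpa [star_trivial] using horth
  refine ⟨⇑(hA.eigenvectorBasis i₀), key, ?_⟩
  rw [hA.mulVec_eigenvectorBasis i₀, hsinf]
  rw [dotProduct_smul, key, smul_eq_mul, mul_one]

open Matrix in
lemma aux_sInf_empty {n : Type*} [Fintype n] [DecidableEq n] [IsEmpty n] (A : Matrix n n ℝ) :
    sInf (spectrum ℝ A) = 0 := by
  haveI : Subsingleton (Matrix n n ℝ) := ⟨fun a b => Matrix.ext fun i _ => isEmptyElim i⟩
  have : spectrum ℝ A = ∅ := by
    ext μ
    simp [spectrum.mem_iff, isUnit_of_subsingleton]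
  rw [this, Real.sInf_empty]

open Matrix in
lemma key_lemma {n m F : Type*} [Fintype n] [Fintype m] [Fintype F]
    [DecidableEq n] [DecidableEq m] [Nonempty m]
    {B : Matrix n n ℝ} (hB : B.IsHermitian) {A : Matrix m m ℝ} (hA : A.IsHermitian)
    (ι : m → n) (hι : Function.Injective ι) (g : m → F → ℝ)
    (hAB : ∀ x y, A x y = B (ι x) (ι y) + ∑ f, g x f * g y f) :
    sInf (spectrum ℝ B) ≤ sInf (spectrum ℝ A) := by
  haveI : Nonempty n := ⟨ι (Classical.arbitrary m)⟩
  obtain ⟨v, hv1, hv2⟩ := aux_exists_unit hA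
  set w : n → ℝ := Function.extend ι v 0 with hwdef
  have hwι : ∀ x, w (ι x) = v x := fun x => hι.extend_apply v 0 x
  have hw0 : ∀ z, z ∉ Set.range ι → w z = 0 := by
    intro z hz
    rw [hwdef, Function.extend_apply' v (0 : n → ℝ) z (by simpa [Set.mem_range] using hz)]
    rfl
  have himg : ∀ (t : n → ℝ), (∀ z, z ∉ Set.range ι → t z = 0) →
      ∑ z, t z = ∑ x, t (ι x) := by
    intro t ht
    rw [← Finset.sum_image (g := ι) (f := t) (fun x _ y _ h => hι h)]
    refine (Finset.sum_subset (Finset.subset_univ _) ?_).symm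
    intro z _ hz
    exact ht z (by simpa using hz)
  have hww : w ⬝ᵥ w = 1 := by
    calc w ⬝ᵥ w = ∑ z, w z * w z := rfl
    _ = ∑ x, w (ι x) * w (ι x) := himg _ (fun z hz => by simp only [hw0 z hz, zero_mul])
    _ = ∑ x, v x * v x := by simp only [hwι]
    _ = 1 := hv1
  have hQ : w ⬝ᵥ (B *ᵥ w) = ∑ x, ∑ y, v x * (B (ι x) (ι y) * v y) := by
    have h1 : w ⬝ᵥ (B *ᵥ w) = ∑ z, w z * ∑ z', B z z' * w z' := rfl
    rw [h1, himg _ (fun z hz => by simp only [hw0 z hz, zero_mul])]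
    refine Finset.sum_congr rfl fun x _ => ?_
    rw [hwι, himg (fun z' => B (ι x) z' * w z')
      (fun z hz => by simp only [hw0 z hz, mul_zero]), Finset.mul_sum]
    exact Finset.sum_congr rfl fun y _ => by rw [hwι]
  have hA2 : v ⬝ᵥ (A *ᵥ v) = ∑ x, ∑ y, v x * (A x y * v y) := by
    have h1 : v ⬝ᵥ (A *ᵥ v) = ∑ x, v x * ∑ y, A x y * v y := rfl
    rw [h1]
    exact Finset.sum_congr rfl fun x _ => Finset.mul_sum _ _ _
  have hsplit : v ⬝ᵥ (A *ᵥ v)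
      = w ⬝ᵥ (B *ᵥ w) + ∑ f, (∑ x, v x * g x f) * (∑ x, v x * g x f) := by
    rw [hA2, hQ]
    have hterm : ∀ x y, v x * (A x y * v y)
        = v x * (B (ι x) (ι y) * v y) + ∑ f, (v x * g x f) * (v y * g y f) := by
      intro x y
      rw [hAB x y, add_mul, mul_add]
      congr 1
      rw [Finset.sum_mul, Finset.mul_sum]
      exact Finset.sum_congr rfl fun f _ => by ring
    simp only [hterm, Finset.sum_add_distrib]
    congr 1
    calc ∑ x, ∑ y, ∑ f, (v x * g x f) * (v y * g y f)
        = ∑ x, ∑ f, ∑ y, (v x * g x f) * (v y * g y f) :=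
          Finset.sum_congr rfl fun x _ => Finset.sum_comm
      _ = ∑ f, ∑ x, ∑ y, (v x * g x f) * (v y * g y f) := Finset.sum_comm
      _ = ∑ f, (∑ x, v x * g x f) * (∑ x, v x * g x f) :=
          Finset.sum_congr rfl fun f _ => (Finset.sum_mul_sum _ _ _ _).symm
  have hb := aux_sInf_le hB w
  rw [hww, mul_one] at hb
  have hnn : 0 ≤ ∑ f, (∑ x, v x * g x f) * (∑ x, v x * g x f) :=
    Finset.sum_nonneg fun f _ => mul_self_nonneg _
  calc sInf (spectrum ℝ B) ≤ w ⬝ᵥ (B *ᵥ w) := hb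
    _ ≤ v ⬝ᵥ (A *ᵥ v) := by rw [hsplit]; linarith
    _ = sInf (spectrum ℝ A) := hv2

open Matrix in
lemma HoffmanGraph.matrixB_isHermitian' {V : Type*} (H : HoffmanGraph V) :
    H.matrixB.IsHermitian := by
  ext x y
  simp only [Matrix.conjTranspose_apply, HoffmanGraph.matrixB, star_trivial]
  rw [H.commonFat_comm y.1 x.1]
  congr 1
  exact if_congr (SimpleGraph.adj_comm _ _ _) rfl rfl

open Matrix in
lemma HoffmanGraph.commonFat_eq_sum' {V : Type*} [Fintype V] (H : HoffmanGraph V) (u w : V) :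
    (H.commonFat u w : ℝ) = ∑ f, (if H.IsFat f ∧ H.graph.Adj u f then (1:ℝ) else 0) *
      (if H.IsFat f ∧ H.graph.Adj w f then (1:ℝ) else 0) := by
  classical
  have hp : ∀ f, (if H.IsFat f ∧ H.graph.Adj u f then (1:ℝ) else 0) *
      (if H.IsFat f ∧ H.graph.Adj w f then (1:ℝ) else 0)
      = if H.IsFat f ∧ H.graph.Adj u f ∧ H.graph.Adj w f then (1:ℝ) else 0 := by
    intro f
    by_cases hf : H.IsFat f <;> by_cases ha : H.graph.Adj u f <;>
      by_cases hb : H.graph.Adj w f <;> simp [hf, ha, hb]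
  have hcard : H.commonFat u w
      = (Finset.univ.filter (fun f => H.IsFat f ∧ H.graph.Adj u f ∧ H.graph.Adj w f)).card := by
    rw [HoffmanGraph.commonFat, Set.ncard_eq_toFinset_card']
    congr 1
    ext f
    simp
  rw [Finset.sum_congr rfl (fun f _ => hp f), Finset.sum_boole, hcard]

open Matrix

/-- Lemma 2.9: if `𝔊` is an induced Hoffman subgraph of `𝔥`, then
`λ_min(𝔊) ≥ λ_min(𝔥)`.  In particular the slim subgraph `Γ` of `𝔥` has smallest
adjacency eigenvalue at least `λ_min(𝔥)`. -/
theorem lambdaMin_le_of_inducedSubgraph {V : Type} [Fintype V] (H : HoffmanGraph V) :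
    (∀ (W : Type) [Fintype W], ∀ K : HoffmanGraph W,
      K.IsInducedSubgraphOf H → H.lambdaMin ≤ K.lambdaMin) ∧
    H.lambdaMin ≤ sInf (spectrum ℝ ((H.graph.induce {v | H.IsSlim v}).adjMatrix ℝ)) := by
  classical
  suffices h : (∀ (W : Type) [Fintype W], ∀ K : HoffmanGraph W, K.IsInducedSubgraphOf H →
      sInf (spectrum ℝ H.matrixB) ≤ sInf (spectrum ℝ K.matrixB)) ∧
      sInf (spectrum ℝ H.matrixB)
        ≤ sInf (spectrum ℝ ((H.graph.induce {v | H.IsSlim v}).adjMatrix ℝ)) by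
    constructor
    · intro W _W K hK
      unfold HoffmanGraph.lambdaMin
      convert h.1 W K hK
    · unfold HoffmanGraph.lambdaMin
      convert h.2
  have hBH := H.matrixB_isHermitian'
  have hlam0 : Nonempty H.Slim → sInf (spectrum ℝ H.matrixB) ≤ 0 := by
    rintro ⟨x⟩
    haveI : Nonempty H.Slim := ⟨x⟩
    have h := aux_sInf_le hBH (Pi.single x 1)
    have h1 : (Pi.single x 1 : H.Slim → ℝ) ⬝ᵥ Pi.single x 1 = 1 := by
      simp [dotProduct, Pi.single_apply]
    have h2 : (Pi.single x 1 : H.Slim → ℝ) ⬝ᵥ (H.matrixB *ᵥ Pi.single x 1)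
        = H.matrixB x x := by
      simp [dotProduct, Matrix.mulVec, Pi.single_apply, mul_ite, ite_mul]
    rw [h1, mul_one, h2] at h
    have h3 : H.matrixB x x ≤ 0 := by
      show (if H.graph.Adj x.1 x.1 then (1:ℝ) else 0) - (H.commonFat x.1 x.1 : ℝ) ≤ 0
      rw [if_neg (H.graph.irrefl)]
      have := Nat.cast_nonneg (α := ℝ) (H.commonFat x.1 x.1)
      linarith
    exact le_trans h h3
  constructor
  · rintro W _ K ⟨e, hadj, hfat⟩
    have hslim : ∀ x : K.Slim, H.IsSlim (e x.1) :=
      fun x hf => (x.2 : ¬ K.IsFat x.1) ((hfat x.1).mp hf)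
    set e' : K.Slim → H.Slim := fun x => ⟨e x.1, hslim x⟩ with he'
    have hι : Function.Injective e' := by
      intro a b hab
      exact Subtype.ext (e.injective (congrArg Subtype.val hab))
    rcases isEmpty_or_nonempty K.Slim with hKe | hKn
    · have hK0 : sInf (spectrum ℝ K.matrixB) = 0 := aux_sInf_empty K.matrixB
      rw [hK0]
      rcases isEmpty_or_nonempty H.Slim with hHe | hHn
      · have hH0 : sInf (spectrum ℝ H.matrixB) = 0 := aux_sInf_empty H.matrixB
        rw [hH0]
      · exact hlam0 hHn
    · refine key_lemma (F := V) hBH K.matrixB_isHermitian' e' hι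
        (fun x f => if f ∈ Set.range e then 0
          else (if H.IsFat f ∧ H.graph.Adj (e x.1) f then (1:ℝ) else 0)) ?_
      intro x y
      have hcf : (H.commonFat (e x.1) (e y.1) : ℝ) = (K.commonFat x.1 y.1 : ℝ)
          + ∑ f, (if f ∈ Set.range e then 0
              else (if H.IsFat f ∧ H.graph.Adj (e x.1) f then (1:ℝ) else 0))
            * (if f ∈ Set.range e then 0
              else (if H.IsFat f ∧ H.graph.Adj (e y.1) f then (1:ℝ) else 0)) := by
        rw [H.commonFat_eq_sum', K.commonFat_eq_sum']
        have hsplitpt : ∀ f : V, (if H.IsFat f ∧ H.graph.Adj (e x.1) f then (1:ℝ) else 0) *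
            (if H.IsFat f ∧ H.graph.Adj (e y.1) f then (1:ℝ) else 0)
            = (if f ∈ Set.range e
                then (if H.IsFat f ∧ H.graph.Adj (e x.1) f then (1:ℝ) else 0) *
                  (if H.IsFat f ∧ H.graph.Adj (e y.1) f then (1:ℝ) else 0) else 0)
              + (if f ∈ Set.range e then 0
                  else (if H.IsFat f ∧ H.graph.Adj (e x.1) f then (1:ℝ) else 0))
                * (if f ∈ Set.range e then 0
                  else (if H.IsFat f ∧ H.graph.Adj (e y.1) f then (1:ℝ) else 0)) := by
          intro f
          by_cases hr : f ∈ Set.range e <;> simp [hr]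
        rw [Finset.sum_congr rfl (fun f _ => hsplitpt f), Finset.sum_add_distrib]
        congr 1
        rw [← Finset.sum_filter]
        have himg : Finset.univ.filter (fun f => f ∈ Set.range e) = Finset.univ.image e := by
          ext f
          simp [Set.mem_range, eq_comm]
        rw [himg, Finset.sum_image (fun a _ b _ h => e.injective h)]
        refine Finset.sum_congr rfl fun f' _ => ?_
        simp only [hfat, hadj]
      show (if K.graph.Adj x.1 y.1 then (1:ℝ) else 0) - (K.commonFat x.1 y.1 : ℝ)
          = ((if H.graph.Adj (e x.1) (e y.1) then (1:ℝ) else 0)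
              - (H.commonFat (e x.1) (e y.1) : ℝ))
            + ∑ f, (if f ∈ Set.range e then 0
                else (if H.IsFat f ∧ H.graph.Adj (e x.1) f then (1:ℝ) else 0))
              * (if f ∈ Set.range e then 0
                else (if H.IsFat f ∧ H.graph.Adj (e y.1) f then (1:ℝ) else 0))
      rw [if_congr (hadj x.1 y.1) rfl rfl]
      rw [hcf]
      ring
  · rcases isEmpty_or_nonempty H.Slim with hHe | hHn
    · haveI : IsEmpty ↥{v : V | H.IsSlim v} := ⟨fun z => hHe.elim ⟨z.1, z.2⟩⟩
      have hH0 : sInf (spectrum ℝ H.matrixB) = 0 := aux_sInf_empty H.matrixB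
      rw [hH0, aux_sInf_empty ((H.graph.induce {v | H.IsSlim v}).adjMatrix ℝ)]
    · haveI : Nonempty ↥{v : V | H.IsSlim v} := hHn.map (fun x => ⟨x.1, x.2⟩)
      have hermA : ((H.graph.induce {v | H.IsSlim v}).adjMatrix ℝ).IsHermitian := by
        rw [Matrix.IsHermitian, Matrix.conjTranspose_eq_transpose_of_trivial]
        exact SimpleGraph.isSymm_adjMatrix (SimpleGraph.induce {v | H.IsSlim v} H.graph)
      refine key_lemma (F := V) hBH hermA (fun z => (⟨z.1, z.2⟩ : H.Slim))
        (fun a b h => Subtype.ext (congrArg Subtype.val h))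
        (fun z f => if H.IsFat f ∧ H.graph.Adj z.1 f then (1:ℝ) else 0) ?_
      intro z z'
      rw [SimpleGraph.adjMatrix_apply, ← H.commonFat_eq_sum' z.1 z'.1]
      have hiff : (H.graph.induce {v | H.IsSlim v}).Adj z z' ↔ H.graph.Adj z.1 z'.1 := by
        simp [SimpleGraph.induce, SimpleGraph.comap_adj]
      rw [if_congr hiff rfl rfl]
      show (if H.graph.Adj z.1 z'.1 then (1:ℝ) else 0)
          = ((if H.graph.Adj z.1 z'.1 then (1:ℝ) else 0) - (H.commonFat z.1 z'.1 : ℝ))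
            + (H.commonFat z.1 z'.1 : ℝ)
      ring
end

section
/- Let 𝔥 be a Hoffman graph and let 𝔥¹ and 𝔥² be two nonempty induced Hoffman subgraphs of 𝔥 satisfying: V(𝔥) = V(𝔥¹) ∪ V(𝔥²); {V_s(𝔥¹), V_s(𝔥²)} is a partition of V_s(𝔥); and every fat neighbor of a slim vertex of 𝔥ⁱ lies in 𝔥ⁱ (i = 1, 2). Let ψ be a reduced representation of 𝔥 of norm m. Then 𝔥 = 𝔥¹ ⊎ 𝔥² if and only if (ψ(x), ψ(y)) = 0 for all x ∈ V_s(𝔥¹) and y ∈ V_s(𝔥²). -/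
attribute [local instance] Classical.propDecidable

open scoped RealInnerProductSpace

/-- Lemma 2.11: given subgraphs satisfying (i)–(iii) of the definition of the sum, and a
reduced representation `ψ` of norm `m`, we have `𝔥 = 𝔥¹ ⊎ 𝔥²` iff `(ψ(x), ψ(y)) = 0`
for all slim `x ∈ 𝔥¹` and slim `y ∈ 𝔥²`. -/
theorem isSum_iff_reducedRep_orthogonal {V : Type} [Fintype V] (H : HoffmanGraph V)
    (W₁ W₂ : Set V) (h1 : W₁.Nonempty) (h2 : W₂.Nonempty)
    (g1 : H.IsGoodSubset W₁) (g2 : H.IsGoodSubset W₂)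
    (hunion : W₁ ∪ W₂ = Set.univ)
    (hpart : ∀ v, H.IsSlim v → (v ∈ W₁ ↔ v ∉ W₂))
    (hfc1 : ∀ x ∈ W₁, H.IsSlim x → ∀ f, H.IsFat f → H.graph.Adj x f → f ∈ W₁)
    (hfc2 : ∀ x ∈ W₂, H.IsSlim x → ∀ f, H.IsFat f → H.graph.Adj x f → f ∈ W₂)
    (m : ℝ) {E : Type*} [NormedAddCommGroup E] [InnerProductSpace ℝ E]
    (ψ : V → E) (hψ : H.IsReducedRep m ψ) :
    H.IsSum W₁ W₂ ↔
      ∀ x ∈ W₁, ∀ y ∈ W₂, H.IsSlim x → H.IsSlim y → ⟪ψ x, ψ y⟫ = 0 := by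
  obtain ⟨hnorm, hadj, hnadj⟩ := hψ
  constructor
  · rintro hsum x hx y hy hxs hys
    have hne : x ≠ y := fun h => ((hpart x hxs).mp hx) (h ▸ hy)
    by_cases ha : H.graph.Adj x y
    · rw [hadj x y hxs hys ha, (hsum.common_iff x hx y hy hxs hys).mpr ha]
      norm_num
    · rw [hnadj x y hxs hys hne ha]
      have hle := hsum.common_le x hx y hy hxs hys
      have : H.commonFat x y ≠ 1 := fun h => ha ((hsum.common_iff x hx y hy hxs hys).mp h)
      interval_cases h : H.commonFat x y <;> simp_all
  · intro horth
    refine ⟨h1, h2, g1, g2, hunion, hpart, hfc1, hfc2, ?_, ?_⟩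
    · intro x hx y hy hxs hys
      have hne : x ≠ y := fun h => ((hpart x hxs).mp hx) (h ▸ hy)
      have h0 := horth x hx y hy hxs hys
      by_cases ha : H.graph.Adj x y
      · rw [hadj x y hxs hys ha] at h0
        have : (H.commonFat x y : ℝ) = 1 := by linarith
        exact_mod_cast this.le
      · rw [hnadj x y hxs hys hne ha] at h0
        have : (H.commonFat x y : ℝ) = 0 := by linarith
        have : H.commonFat x y = 0 := by exact_mod_cast this
        omega
    · intro x hx y hy hxs hys
      have hne : x ≠ y := fun h => ((hpart x hxs).mp hx) (h ▸ hy)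
      have h0 := horth x hx y hy hxs hys
      constructor
      · intro hc
        by_contra ha
        rw [hnadj x y hxs hys hne ha, hc] at h0
        norm_num at h0
      · intro ha
        rw [hadj x y hxs hys ha] at h0
        have : (H.commonFat x y : ℝ) = 1 := by linarith
        exact_mod_cast this
end

section
/- Let 𝔥 be a fat indecomposable (−3)-saturated Hoffman graph. Then the reduced representation ψ of norm 3 of 𝔥 is injective on the slim vertices, unless 𝔥 is isomorphic to an induced Hoffman subgraph of the following Hoffman graph 𝔎: the slim vertices of 𝔎 are the elements of ℤ/4ℤ, the fat vertices are f_i for i ∈ ℤ/4ℤ, and the edges are {0, 2}, {1, 3} together with all pairs {i, f_j} with i = j or i = j + 1. -/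
attribute [local instance] Classical.propDecidable

open scoped RealInnerProductSpace

namespace HoffmanGraph

lemma decomposable_of_split {V : Type*} (H : HoffmanGraph V) (P : V → Prop)
    (h1 : ∃ v, H.IsSlim v ∧ P v) (h2 : ∃ v, H.IsSlim v ∧ ¬ P v)
    (hadj : ∀ a b, H.IsSlim a → H.IsSlim b → P a → ¬ P b →
      H.graph.Adj a b → H.commonFat a b = 1)
    (hnadj : ∀ a b, H.IsSlim a → H.IsSlim b → P a → ¬ P b → a ≠ b →
      ¬ H.graph.Adj a b → H.commonFat a b = 0) :
    H.Decomposable := by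
  classical
  obtain ⟨v₁, hv₁s, hv₁⟩ := h1
  obtain ⟨v₂, hv₂s, hv₂⟩ := h2
  refine ⟨{v | (H.IsSlim v ∧ P v) ∨ (H.IsFat v ∧ ∃ z, H.IsSlim z ∧ P z ∧ H.graph.Adj z v)},
          {v | (H.IsSlim v ∧ ¬P v) ∨ (H.IsFat v ∧ ∃ z, H.IsSlim z ∧ ¬P z ∧ H.graph.Adj z v)},
          ?_⟩
  have hslimW₁ : ∀ v, H.IsSlim v →
      (v ∈ {v | (H.IsSlim v ∧ P v) ∨ (H.IsFat v ∧ ∃ z, H.IsSlim z ∧ P z ∧ H.graph.Adj z v)} ↔ P v) := by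
    intro v hv
    simp only [Set.mem_setOf_eq]
    constructor
    · rintro (⟨_, hp⟩ | ⟨hf, _⟩)
      · exact hp
      · exact absurd hf hv
    · intro hp; exact Or.inl ⟨hv, hp⟩
  have hslimW₂ : ∀ v, H.IsSlim v →
      (v ∈ {v | (H.IsSlim v ∧ ¬P v) ∨ (H.IsFat v ∧ ∃ z, H.IsSlim z ∧ ¬P z ∧ H.graph.Adj z v)} ↔ ¬P v) := by
    intro v hv
    simp only [Set.mem_setOf_eq]
    constructor
    · rintro (⟨_, hp⟩ | ⟨hf, _⟩)
      · exact hp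
      · exact absurd hf hv
    · intro hp; exact Or.inl ⟨hv, hp⟩
  constructor
  · exact ⟨v₁, Or.inl ⟨hv₁s, hv₁⟩⟩
  · exact ⟨v₂, Or.inl ⟨hv₂s, hv₂⟩⟩
  · rintro x (⟨hs, _⟩ | ⟨_, z, hzs, hzp, hzadj⟩) hf
    · exact absurd hf hs
    · exact ⟨z, Or.inl ⟨hzs, hzp⟩, hzs, hzadj.symm⟩
  · rintro x (⟨hs, _⟩ | ⟨_, z, hzs, hzp, hzadj⟩) hf
    · exact absurd hf hs
    · exact ⟨z, Or.inl ⟨hzs, hzp⟩, hzs, hzadj.symm⟩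
  · ext v
    simp only [Set.mem_union, Set.mem_setOf_eq, Set.mem_univ, iff_true]
    by_cases hf : H.IsFat v
    · obtain ⟨z, hzs, hzadj⟩ := H.fat_slim_nbr hf
      by_cases hp : P z
      · exact Or.inl (Or.inr ⟨hf, z, hzs, hp, hzadj.symm⟩)
      · exact Or.inr (Or.inr ⟨hf, z, hzs, hp, hzadj.symm⟩)
    · by_cases hp : P v
      · exact Or.inl (Or.inl ⟨hf, hp⟩)
      · exact Or.inr (Or.inl ⟨hf, hp⟩)
  · intro v hv
    rw [hslimW₁ v hv, hslimW₂ v hv]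
    tauto
  · intro z hz hzs f hf hadj'
    rw [hslimW₁ z hzs] at hz
    exact Or.inr ⟨hf, z, hzs, hz, hadj'⟩
  · intro z hz hzs f hf hadj'
    rw [hslimW₂ z hzs] at hz
    exact Or.inr ⟨hf, z, hzs, hz, hadj'⟩
  · intro a ha b hb has hbs
    rw [hslimW₁ a has] at ha
    rw [hslimW₂ b hbs] at hb
    by_cases hab : H.graph.Adj a b
    · rw [hadj a b has hbs ha hb hab]
    · rw [hnadj a b has hbs ha hb (by rintro rfl; exact hb ha) hab]
      omega
  · intro a ha b hb has hbs
    rw [hslimW₁ a has] at ha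
    rw [hslimW₂ b hbs] at hb
    constructor
    · intro hc
      by_contra hab
      rw [hnadj a b has hbs ha hb (by rintro rfl; exact hb ha) hab] at hc
      omega
    · exact hadj a b has hbs ha hb

lemma commonFat_set {V : Type*} (H : HoffmanGraph V) (x y : V) :
    H.commonFat x y = {f : V | H.IsFat f ∧ H.graph.Adj x f ∧ H.graph.Adj y f}.ncard := rfl

lemma fatDeg_set {V : Type*} (H : HoffmanGraph V) (x : V) :
    H.fatDeg x = {f : V | H.IsFat f ∧ H.graph.Adj x f}.ncard := rfl

lemma commonFat_self' {V : Type*} (H : HoffmanGraph V) (x : V) :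
    H.commonFat x x = H.fatDeg x := by
  unfold commonFat fatDeg
  congr 1
  ext f
  simp only [Set.mem_setOf_eq, and_self_iff]

lemma K_ll (i j : ZMod 4) :
    exampleA3tilde.graph.Adj (.inl i) (.inl j) ↔ j = i + 2 := Iff.rfl
lemma K_lr (i j : ZMod 4) :
    exampleA3tilde.graph.Adj (.inl i) (.inr j) ↔ i = j ∨ i = j + 1 := Iff.rfl
lemma K_rl (i j : ZMod 4) :
    exampleA3tilde.graph.Adj (.inr j) (.inl i) ↔ i = j ∨ i = j + 1 := Iff.rfl
lemma K_rr (i j : ZMod 4) :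
    exampleA3tilde.graph.Adj (.inr i) (.inr j) ↔ False := Iff.rfl
lemma K_fat_l (i : ZMod 4) : exampleA3tilde.IsFat (.inl i) ↔ False := Iff.rfl
lemma K_fat_r (i : ZMod 4) : exampleA3tilde.IsFat (.inr i) ↔ True := Iff.rfl

lemma three_le_ncard_aux {V : Type*} [Finite V] {s : Set V} {a b c : V}
    (hab : a ≠ b) (hac : a ≠ c) (hbc : b ≠ c)
    (ha : a ∈ s) (hb : b ∈ s) (hc : c ∈ s) : 3 ≤ s.ncard := by
  have h1 : ({a, b, c} : Set V).ncard = 3 := by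
    rw [Set.ncard_insert_of_notMem (by simp [hab, hac]) (Set.toFinite _),
      Set.ncard_insert_of_notMem (by simp [hbc]) (Set.toFinite _), Set.ncard_singleton]
  rw [← h1]
  exact Set.ncard_le_ncard (by simp [Set.insert_subset_iff, ha, hb, hc]) (Set.toFinite _)

lemma attach_commonFat {V : Type} [Fintype V] (H : HoffmanGraph V) (S : Set V)
    (hne : S.Nonempty) (hslim : ∀ v ∈ S, H.IsSlim v) (z w : V) :
    (H.attachFat S hne hslim).commonFat (some z) (some w) =
      H.commonFat z w + (if z ∈ S ∧ w ∈ S then 1 else 0) := by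
  classical
  unfold commonFat
  have hset : {f : Option V | (H.attachFat S hne hslim).IsFat f ∧
        (H.attachFat S hne hslim).graph.Adj (some z) f ∧
        (H.attachFat S hne hslim).graph.Adj (some w) f}
      = (some '' {f : V | H.IsFat f ∧ H.graph.Adj z f ∧ H.graph.Adj w f}) ∪
        (if z ∈ S ∧ w ∈ S then {none} else ∅) := by
    ext f
    cases f with
    | none =>
      simp only [Set.mem_setOf_eq, Set.mem_union, Set.mem_image]
      constructor
      · rintro ⟨-, h1, h2⟩
        right
        simp only [show ((H.attachFat S hne hslim).graph.Adj (some z) none) = (z ∈ S) from rfl] at h1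
        simp only [show ((H.attachFat S hne hslim).graph.Adj (some w) none) = (w ∈ S) from rfl] at h2
        simp [h1, h2]
      · rintro (⟨g, -, hg⟩ | hmem)
        · exact absurd hg (by simp)
        · by_cases hzw : z ∈ S ∧ w ∈ S
          · exact ⟨trivial, hzw.1, hzw.2⟩
          · simp [hzw] at hmem
    | some g =>
      simp only [Set.mem_setOf_eq, Set.mem_union, Set.mem_image]
      constructor
      · rintro ⟨h1, h2, h3⟩
        exact Or.inl ⟨g, ⟨h1, h2, h3⟩, rfl⟩
      · rintro (⟨g', hg', hgg⟩ | hmem)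
        · obtain rfl : g' = g := Option.some_injective _ hgg
          exact ⟨hg'.1, hg'.2.1, hg'.2.2⟩
        · by_cases hzw : z ∈ S ∧ w ∈ S <;> simp [hzw] at hmem
  rw [hset, Set.ncard_union_eq ?_ (Set.toFinite _) (Set.toFinite _),
    Set.ncard_image_of_injective _ (Option.some_injective V)]
  · by_cases hzw : z ∈ S ∧ w ∈ S <;> simp [hzw]
  · rw [Set.disjoint_left]
    rintro f ⟨g, -, rfl⟩ hmem
    by_cases hzw : z ∈ S ∧ w ∈ S <;> simp [hzw] at hmem

lemma lambdaMin_ge_neg3_of_gram {V : Type} [Fintype V] (H : HoffmanGraph V)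
    {E : Type*} [NormedAddCommGroup E] [InnerProductSpace ℝ E]
    (φ : H.Slim → E)
    (hφ : ∀ a b : H.Slim, ⟪φ a, φ b⟫ = H.matrixB a b + (if a = b then 3 else 0)) :
    (-3 : ℝ) ≤ H.lambdaMin := by
  classical
  rcases (spectrum ℝ H.matrixB).eq_empty_or_nonempty with hemp | hne
  · rw [HoffmanGraph.lambdaMin, hemp, Real.sInf_empty]; norm_num
  · refine le_csInf hne ?_
    intro lam hlam
    rw [spectrum.mem_iff, Matrix.isUnit_iff_isUnit_det, isUnit_iff_ne_zero, not_not] at hlam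
    obtain ⟨v, hv0, hv⟩ := (Matrix.exists_mulVec_eq_zero_iff).mpr hlam
    have hMv : H.matrixB.mulVec v = lam • v := by
      rw [Matrix.sub_mulVec, Algebra.algebraMap_eq_smul_one, Matrix.smul_mulVec,
        Matrix.one_mulVec, sub_eq_zero] at hv
      exact hv.symm
    have key : (0:ℝ) ≤ (lam + 3) * ∑ a, v a * v a := by
      have h1 : (0:ℝ) ≤ ⟪∑ a, v a • φ a, ∑ b, v b • φ b⟫ := real_inner_self_nonneg
      have h2 : ⟪∑ a, v a • φ a, ∑ b, v b • φ b⟫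
          = ∑ a, ∑ b, v a * v b * (H.matrixB a b + if a = b then 3 else 0) := by
        rw [sum_inner]
        refine Finset.sum_congr rfl fun a _ => ?_
        rw [inner_sum]
        refine Finset.sum_congr rfl fun b _ => ?_
        rw [real_inner_smul_left, real_inner_smul_right, hφ]
        ring
      have h3 : ∑ a, ∑ b, v a * v b * (H.matrixB a b + if a = b then 3 else 0)
          = (∑ a, v a * (H.matrixB.mulVec v a)) + 3 * ∑ a, v a * v a := by
        simp only [mul_add, Finset.sum_add_distrib, mul_ite, mul_zero]
        congr 1
        · refine Finset.sum_congr rfl fun a _ => ?_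
          rw [Matrix.mulVec, dotProduct, Finset.mul_sum]
          exact Finset.sum_congr rfl fun b _ => by ring
        · rw [Finset.mul_sum]
          refine Finset.sum_congr rfl fun a _ => ?_
          rw [Finset.sum_ite_eq]
          simp only [Finset.mem_univ, if_true]
          ring
      have h4 : ∑ a, v a * (H.matrixB.mulVec v a) = lam * ∑ a, v a * v a := by
        rw [hMv, Finset.mul_sum]
        refine Finset.sum_congr rfl fun a _ => ?_
        simp only [Pi.smul_apply, smul_eq_mul]
        ring
      rw [h2, h3, h4] at h1
      nlinarith [h1]
    have hpos : (0:ℝ) < ∑ a, v a * v a := by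
      obtain ⟨a, ha⟩ := Function.ne_iff.mp hv0
      refine Finset.sum_pos' (fun b _ => mul_self_nonneg _) ⟨a, Finset.mem_univ a, ?_⟩
      exact mul_self_pos.mpr ha
    nlinarith [key, hpos]

end HoffmanGraph

set_option maxHeartbeats 2000000 in
/-- Lemma 4.5: the reduced representation of norm `3` of a fat indecomposable
`(-3)`-saturated Hoffman graph is injective on the slim vertices, unless the graph is
isomorphic to an induced Hoffman subgraph of the Hoffman graph of Example 4.2. -/
theorem reducedRep_injective_or_subgraph_of_exampleA3tilde {V : Type} [Fintype V]
    (H : HoffmanGraph V) (hfat : H.IsFatGraph) (hind : H.Indecomposable)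
    (hsat : H.IsSaturated (-3))
    {E : Type*} [NormedAddCommGroup E] [InnerProductSpace ℝ E]
    (ψ : V → E) (hψ : H.IsReducedRep 3 ψ) :
    (∀ x y, H.IsSlim x → H.IsSlim y → ψ x = ψ y → x = y) ∨
      H.IsInducedSubgraphOf HoffmanGraph.exampleA3tilde := by
  classical
  by_cases hinj : ∀ x y, H.IsSlim x → H.IsSlim y → ψ x = ψ y → x = y
  · exact Or.inl hinj
  right
  push_neg at hinj
  obtain ⟨x, y, hsx, hsy, hpsi, hne_xy⟩ := hinj
  obtain ⟨hr1, hr2, hr3⟩ := hψ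
  have hd3 : ∀ z, H.IsSlim z → H.fatDeg z ≤ 3 := by
    intro z hz
    have h := hr1 z hz
    have h0 : (0:ℝ) ≤ 3 - H.fatDeg z := h ▸ real_inner_self_nonneg
    have h1 : (H.fatDeg z : ℝ) ≤ 3 := by linarith
    exact_mod_cast h1
  have hd1 : ∀ z, H.IsSlim z → 1 ≤ H.fatDeg z := by
    intro z hz
    obtain ⟨f, hf, hadj⟩ := hfat z hz
    exact (Set.ncard_pos (Set.toFinite _)).mpr ⟨f, hf, hadj⟩
  have hzero : ∀ z, H.IsSlim z → ψ z ≠ 0 := by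
    intro z hz hz0
    have hw : ∃ w, H.IsSlim w ∧ w ≠ z := by
      by_cases hx : x = z
      · exact ⟨y, hsy, fun h => hne_xy (by rw [hx, h])⟩
      · exact ⟨x, hsx, hx⟩
    obtain ⟨w, hws, hwz⟩ := hw
    apply hind
    refine H.decomposable_of_split (fun v => v = z) ⟨z, hz, rfl⟩ ⟨w, hws, hwz⟩ ?_ ?_
    · rintro a b has hbs rfl hb hab
      have h := hr2 a b has hbs hab
      rw [hz0, inner_zero_left] at h
      have h' : (H.commonFat a b : ℝ) = 1 := by linarith
      exact_mod_cast h'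
    · rintro a b has hbs rfl hb hne hab
      have h := hr3 a b has hbs hne hab
      rw [hz0, inner_zero_left] at h
      have h' : (H.commonFat a b : ℝ) = 0 := by linarith
      exact_mod_cast h'
  have hxx : ⟪ψ x, ψ x⟫ = 3 - H.fatDeg x := hr1 x hsx
  have hyy' : ⟪ψ x, ψ y⟫ = 3 - H.fatDeg y := by rw [hpsi]; exact hr1 y hsy
  have hxx' : ⟪ψ x, ψ y⟫ = 3 - H.fatDeg x := by rw [← hpsi]; exact hr1 x hsx
  have hdx3 : H.fatDeg x ≠ 3 := by
    intro h
    have h0 : ⟪ψ x, ψ x⟫ = 0 := by rw [hxx, h]; norm_num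
    exact hzero x hsx (inner_self_eq_zero.mp h0)
  have hdy3 : H.fatDeg y ≠ 3 := by
    intro h
    have h0 : ⟪ψ y, ψ y⟫ = 0 := by rw [hr1 y hsy, h]; norm_num
    exact hzero y hsy (inner_self_eq_zero.mp h0)
  have hxy_adj : H.graph.Adj x y := by
    by_contra hna
    have h := hr3 x y hsx hsy hne_xy hna
    rw [hyy'] at h
    have hc : (0:ℝ) ≤ H.commonFat x y := Nat.cast_nonneg _
    have hdy : (H.fatDeg y : ℝ) ≤ 3 := by exact_mod_cast hd3 y hsy
    have h3 : (H.fatDeg y : ℝ) = 3 := by linarith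
    exact hdy3 (by exact_mod_cast h3)
  have h1 := hr2 x y hsx hsy hxy_adj
  have hdx2 : H.fatDeg x = 2 ∧ H.commonFat x y = 0 := by
    have e1 : (3:ℝ) - H.fatDeg x = 1 - H.commonFat x y := by rw [← hxx', h1]
    have e2 : H.commonFat x y + 3 = H.fatDeg x + 1 := by
      have : (H.commonFat x y : ℝ) + 3 = (H.fatDeg x : ℝ) + 1 := by linarith
      exact_mod_cast this
    have e3 := hd3 x hsx
    constructor <;> omega
  have hdy2 : H.fatDeg y = 2 := by
    have e1 : (3:ℝ) - H.fatDeg y = 1 - H.commonFat x y := by rw [← hyy', h1]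
    have e2 : H.commonFat x y + 3 = H.fatDeg y + 1 := by
      have : (H.commonFat x y : ℝ) + 3 = (H.fatDeg y : ℝ) + 1 := by linarith
      exact_mod_cast this
    have e3 := hd3 y hsy
    omega
  obtain ⟨hdx2, hcxy⟩ := hdx2
  have hu1 : ⟪ψ x, ψ x⟫ = 1 := by rw [hxx, hdx2]; norm_num
  have hu1' : ⟪ψ x, ψ y⟫ = 1 := by rw [hxx', hdx2]; norm_num
  -- the common-fat set of x and y is empty
  have hcxy_set : ∀ f, ¬ (H.IsFat f ∧ H.graph.Adj x f ∧ H.graph.Adj y f) := by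
    intro f hf
    have : {f : V | H.IsFat f ∧ H.graph.Adj x f ∧ H.graph.Adj y f} = ∅ :=
      (Set.ncard_eq_zero (Set.toFinite _)).mp hcxy
    exact absurd (this ▸ hf : f ∈ (∅ : Set V)) (Set.notMem_empty f)
  -- the pair equation
  have hpair : ∀ a b, H.IsSlim a → H.IsSlim b → a ≠ b →
      ⟪ψ a, ψ b⟫ = (if H.graph.Adj a b then 1 else 0) - H.commonFat a b := by
    intro a b ha hb hne
    by_cases h : H.graph.Adj a b
    · rw [if_pos h]; exact hr2 a b ha hb h
    · rw [if_neg h, hr3 a b ha hb hne h]; ring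
  -- trichotomy for inner products with ψ x
  have htri : ∀ z, H.IsSlim z →
      ⟪ψ x, ψ z⟫ = -1 ∨ ⟪ψ x, ψ z⟫ = 0 ∨ ⟪ψ x, ψ z⟫ = 1 := by
    intro z hz
    by_cases hzx : z = x
    · subst hzx; right; right; exact hu1
    by_cases hzy : z = y
    · subst hzy; right; right; exact hu1'
    have h := hpair x z hsx hz (Ne.symm hzx)
    have hcs := real_inner_mul_inner_self_le (ψ x) (ψ z)
    rw [hu1, hr1 z hz, one_mul] at hcs
    have hdz1 : (1:ℝ) ≤ H.fatDeg z := by exact_mod_cast hd1 z hz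
    have hsq : ⟪ψ x, ψ z⟫ * ⟪ψ x, ψ z⟫ ≤ 2 := by linarith
    by_cases hadj : H.graph.Adj x z
    · rw [if_pos hadj] at h
      have hc2 : H.commonFat x z ≤ 2 := by
        by_contra hc
        push_neg at hc
        have hc3 : (3:ℝ) ≤ H.commonFat x z := by exact_mod_cast hc
        nlinarith
      rcases (show H.commonFat x z = 0 ∨ H.commonFat x z = 1 ∨ H.commonFat x z = 2 by omega)
        with h0 | h0 | h0
      · right; right; rw [h, h0]; norm_num
      · right; left; rw [h, h0]; norm_num
      · left; rw [h, h0]; norm_num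
    · rw [if_neg hadj] at h
      have hc1 : H.commonFat x z ≤ 1 := by
        by_contra hc
        push_neg at hc
        have hc3 : (2:ℝ) ≤ H.commonFat x z := by exact_mod_cast hc
        nlinarith
      rcases (show H.commonFat x z = 0 ∨ H.commonFat x z = 1 by omega) with h0 | h0
      · right; left; rw [h, h0]; norm_num
      · left; rw [h, h0]; norm_num
  -- saturation gives a vertex with inner product -1
  have hz1ex : ∃ z, H.IsSlim z ∧ ⟪ψ x, ψ z⟫ = -1 := by
    by_contra hno
    push_neg at hno
    have ht01 : ∀ z, H.IsSlim z → ⟪ψ x, ψ z⟫ = 0 ∨ ⟪ψ x, ψ z⟫ = 1 := by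
      intro z hz
      rcases htri z hz with h | h | h
      · exact absurd h (hno z hz)
      · exact Or.inl h
      · exact Or.inr h
    set S : Set V := {z | H.IsSlim z ∧ ⟪ψ x, ψ z⟫ = 1} with hS
    have hxS : x ∈ S := ⟨hsx, hu1⟩
    have hSslim : ∀ v ∈ S, H.IsSlim v := fun v hv => hv.1
    apply hsat.2 S ⟨x, hxS⟩ hSslim
    have hval : ∀ z w, H.IsSlim z → H.IsSlim w →
        (if z ∈ S ∧ w ∈ S then (1:ℝ) else 0) = ⟪ψ x, ψ z⟫ * ⟪ψ x, ψ w⟫ := by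
      intro z w hz hw
      rcases ht01 z hz with h1 | h1 <;> rcases ht01 w hw with h2 | h2 <;>
        simp [hS, Set.mem_setOf_eq, h1, h2, hz, hw]
    apply HoffmanGraph.lambdaMin_ge_neg3_of_gram _
      (fun a => (Option.elim a.1 0 (fun z => ψ z - ⟪ψ x, ψ z⟫ • ψ x) : E))
    rintro ⟨a0, ha⟩ ⟨b0, hb⟩
    cases a0 with
    | none => exact absurd trivial ha
    | some za =>
    cases b0 with
    | none => exact absurd trivial hb
    | some zb =>
    have hza : H.IsSlim za := ha
    have hzb : H.IsSlim zb := hb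
    have hsub : ((⟨some za, ha⟩ : (H.attachFat S ⟨x, hxS⟩ hSslim).Slim) = ⟨some zb, hb⟩)
        ↔ za = zb := by simp [Subtype.ext_iff]
    have hadjred : (H.attachFat S ⟨x, hxS⟩ hSslim).graph.Adj (some za) (some zb)
        ↔ H.graph.Adj za zb := Iff.rfl
    show ⟪ψ za - ⟪ψ x, ψ za⟫ • ψ x, ψ zb - ⟪ψ x, ψ zb⟫ • ψ x⟫ = _
    simp only [HoffmanGraph.matrixB]
    have hcf : (H.attachFat S ⟨x, hxS⟩ hSslim).commonFat (some za) (some zb) =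
        H.commonFat za zb + (if za ∈ S ∧ zb ∈ S then 1 else 0) :=
      by convert HoffmanGraph.attach_commonFat H S ⟨x, hxS⟩ hSslim za zb
    rw [hcf]
    simp only [hsub, hadjred]
    push_cast
    rw [hval za zb hza hzb]
    have hexp : ⟪ψ za - ⟪ψ x, ψ za⟫ • ψ x, ψ zb - ⟪ψ x, ψ zb⟫ • ψ x⟫
        = ⟪ψ za, ψ zb⟫ - ⟪ψ x, ψ za⟫ * ⟪ψ x, ψ zb⟫ := by
      simp only [inner_sub_left, inner_sub_right, real_inner_smul_left, real_inner_smul_right]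
      rw [real_inner_comm (ψ za) (ψ x), hu1]
      ring
    rw [hexp]
    by_cases heq : za = zb
    · subst heq
      rw [if_pos rfl, if_neg (H.graph.loopless.irrefl za), H.commonFat_self', hr1 za hza]
      ring
    · rw [if_neg heq]
      by_cases hadj : H.graph.Adj za zb
      · rw [if_pos hadj, hr2 za zb hza hzb hadj]; ring
      · rw [if_neg hadj, hr3 za zb hza hzb heq hadj]; ring
  obtain ⟨z₁, hsz₁, htz₁⟩ := hz1ex
  have key1 : ∀ p q z, H.IsSlim p → H.IsSlim q → ψ p = ψ q → H.IsSlim z → z ≠ p → z ≠ q →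
      (∀ f, ¬ (H.IsFat f ∧ H.graph.Adj p f ∧ H.graph.Adj q f)) →
      ⟪ψ p, ψ z⟫ = -1 →
      ¬ H.graph.Adj p z ∧ H.commonFat p z = 1 := by
    intro p q z hp hq hpq hz hzp hzq hdisj ht
    by_cases hadj : H.graph.Adj p z
    · exfalso
      have h := hr2 p z hp hz hadj
      rw [ht] at h
      have hc2 : H.commonFat p z = 2 := by
        have h' : (H.commonFat p z : ℝ) = 2 := by linarith
        exact_mod_cast h'
      rw [H.commonFat_set] at hc2
      obtain ⟨a, b, hab, hset⟩ := Set.ncard_eq_two.mp hc2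
      have haf : H.IsFat a ∧ H.graph.Adj p a ∧ H.graph.Adj z a := by
        have h' : a ∈ {f : V | H.IsFat f ∧ H.graph.Adj p f ∧ H.graph.Adj z f} := by
          rw [hset]; simp
        exact h'
      have hbf : H.IsFat b ∧ H.graph.Adj p b ∧ H.graph.Adj z b := by
        have h' : b ∈ {f : V | H.IsFat f ∧ H.graph.Adj p f ∧ H.graph.Adj z f} := by
          rw [hset]; simp
        exact h'
      have htq : ⟪ψ q, ψ z⟫ = -1 := by rw [← hpq]; exact ht
      have hcq : 1 ≤ H.commonFat q z := by
        by_contra hcq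
        push_neg at hcq
        have h0 : H.commonFat q z = 0 := by omega
        have h'' := hpair q z hq hz (Ne.symm hzq)
        rw [htq, h0] at h''
        by_cases hadj' : H.graph.Adj q z
        · rw [if_pos hadj'] at h''; norm_num at h''
        · rw [if_neg hadj'] at h''; norm_num at h''
      rw [H.commonFat_set] at hcq
      have hgpos : 0 < {f : V | H.IsFat f ∧ H.graph.Adj q f ∧ H.graph.Adj z f}.ncard := hcq
      obtain ⟨g, hg⟩ := (Set.ncard_pos (Set.toFinite _)).mp hgpos
      have hag : a ≠ g := by rintro rfl; exact hdisj a ⟨haf.1, haf.2.1, hg.2.1⟩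
      have hbg : b ≠ g := by rintro rfl; exact hdisj b ⟨hbf.1, hbf.2.1, hg.2.1⟩
      have hg3 : 3 ≤ H.fatDeg z := by
        rw [H.fatDeg_set]
        exact HoffmanGraph.three_le_ncard_aux hab hag hbg ⟨haf.1, haf.2.2⟩ ⟨hbf.1, hbf.2.2⟩
          ⟨hg.1, hg.2.2⟩
      have hdz := hd3 z hz
      have h0 : ⟪ψ z, ψ z⟫ = 0 := by
        rw [hr1 z hz, (by omega : H.fatDeg z = 3)]; norm_num
      exact hzero z hz (inner_self_eq_zero.mp h0)
    · have h := hr3 p z hp hz (Ne.symm hzp) hadj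
      rw [ht] at h
      have h' : (H.commonFat p z : ℝ) = 1 := by linarith
      exact ⟨hadj, by exact_mod_cast h'⟩
  -- full structure of a vertex with inner product -1
  have hF : ∀ z, H.IsSlim z → ⟪ψ x, ψ z⟫ = -1 →
      ¬ H.graph.Adj x z ∧ ¬ H.graph.Adj y z ∧ H.fatDeg z = 2 ∧ ψ z = -ψ x ∧
      ∃ a b, a ≠ b ∧
        {f : V | H.IsFat f ∧ H.graph.Adj x f ∧ H.graph.Adj z f} = {a} ∧
        {f : V | H.IsFat f ∧ H.graph.Adj y f ∧ H.graph.Adj z f} = {b} ∧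
        {f : V | H.IsFat f ∧ H.graph.Adj z f} = {a, b} := by
    intro z hz ht
    have hzx : z ≠ x := by rintro rfl; rw [hu1] at ht; norm_num at ht
    have hzy : z ≠ y := by rintro rfl; rw [hu1'] at ht; norm_num at ht
    obtain ⟨hnx, hcx⟩ := key1 x y z hsx hsy hpsi hz hzx hzy hcxy_set ht
    have hty : ⟪ψ y, ψ z⟫ = -1 := by rw [← hpsi]; exact ht
    have hdisj' : ∀ f, ¬ (H.IsFat f ∧ H.graph.Adj y f ∧ H.graph.Adj x f) := fun f hf =>
      hcxy_set f ⟨hf.1, hf.2.2, hf.2.1⟩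
    obtain ⟨hny, hcy⟩ := key1 y x z hsy hsx hpsi.symm hz hzy hzx hdisj' hty
    rw [H.commonFat_set] at hcx hcy
    obtain ⟨a, hca⟩ := Set.ncard_eq_one.mp hcx
    obtain ⟨b, hcb⟩ := Set.ncard_eq_one.mp hcy
    have haf : H.IsFat a ∧ H.graph.Adj x a ∧ H.graph.Adj z a := by
      have h' : a ∈ {f : V | H.IsFat f ∧ H.graph.Adj x f ∧ H.graph.Adj z f} := by
        rw [hca]; simp
      exact h'
    have hbf : H.IsFat b ∧ H.graph.Adj y b ∧ H.graph.Adj z b := by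
      have h' : b ∈ {f : V | H.IsFat f ∧ H.graph.Adj y f ∧ H.graph.Adj z f} := by
        rw [hcb]; simp
      exact h'
    have hab : a ≠ b := by
      rintro rfl
      exact hcxy_set a ⟨haf.1, haf.2.1, hbf.2.1⟩
    have hsub : ({a, b} : Set V) ⊆ {f : V | H.IsFat f ∧ H.graph.Adj z f} := by
      rintro f (rfl | rfl)
      · exact ⟨haf.1, haf.2.2⟩
      · exact ⟨hbf.1, hbf.2.2⟩
    have hdz2 : H.fatDeg z = 2 := by
      have hup : H.fatDeg z ≤ 3 := hd3 z hz
      have hne3 : H.fatDeg z ≠ 3 := by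
        intro h3
        have h0 : ⟪ψ z, ψ z⟫ = 0 := by rw [hr1 z hz, h3]; norm_num
        exact hzero z hz (inner_self_eq_zero.mp h0)
      have hlo : 2 ≤ H.fatDeg z := by
        rw [H.fatDeg_set]
        have h' := Set.ncard_le_ncard hsub (Set.toFinite _)
        rw [Set.ncard_pair hab] at h'
        exact h'
      omega
    have hFsz : {f : V | H.IsFat f ∧ H.graph.Adj z f} = {a, b} := by
      refine (Set.eq_of_subset_of_ncard_le hsub ?_ (Set.toFinite _)).symm
      rw [Set.ncard_pair hab, ← H.fatDeg_set, hdz2]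
    have hpz : ψ z = -ψ x := by
      have hzz : ⟪ψ z, ψ z⟫ = 1 := by rw [hr1 z hz, hdz2]; norm_num
      have ht' : ⟪ψ z, ψ x⟫ = -1 := by rw [real_inner_comm]; exact ht
      have hsum : ⟪ψ z + ψ x, ψ z + ψ x⟫ = 0 := by
        rw [inner_add_left, inner_add_right, inner_add_right, hzz, hu1, ht', ht]
        ring
      exact eq_neg_of_add_eq_zero_left (inner_self_eq_zero.mp hsum)
    exact ⟨hnx, hny, hdz2, hpz, a, b, hab, hca, hcb, hFsz⟩
  obtain ⟨hnxz₁, hnyz₁, hdz₁, hpz₁, a₁, b₁, hab₁, hca₁, hcb₁, hFsz₁⟩ := hF z₁ hsz₁ htz₁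
  have ha₁ : H.IsFat a₁ ∧ H.graph.Adj x a₁ ∧ H.graph.Adj z₁ a₁ := by
    have h' : a₁ ∈ {f : V | H.IsFat f ∧ H.graph.Adj x f ∧ H.graph.Adj z₁ f} := by
      rw [hca₁]; simp
    exact h'
  have hb₁ : H.IsFat b₁ ∧ H.graph.Adj y b₁ ∧ H.graph.Adj z₁ b₁ := by
    have h' : b₁ ∈ {f : V | H.IsFat f ∧ H.graph.Adj y f ∧ H.graph.Adj z₁ f} := by
      rw [hcb₁]; simp
    exact h'
  -- vertices with inner product 1 are x or y
  have hT1 : ∀ z, H.IsSlim z → ⟪ψ x, ψ z⟫ = 1 → z = x ∨ z = y := by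
    intro z hz ht
    by_contra hcon
    push_neg at hcon
    obtain ⟨hzx, hzy⟩ := hcon
    have hzz₁ : z ≠ z₁ := by
      rintro rfl
      rw [htz₁] at ht; norm_num at ht
    -- adjacency to x with no common fat
    have hax : H.graph.Adj x z ∧ {f : V | H.IsFat f ∧ H.graph.Adj x f ∧ H.graph.Adj z f} = ∅ := by
      have h := hpair x z hsx hz (Ne.symm hzx)
      rw [ht] at h
      by_cases hadj : H.graph.Adj x z
      · rw [if_pos hadj] at h
        have h0 : (H.commonFat x z : ℝ) = 0 := by linarith
        have h0' : H.commonFat x z = 0 := by exact_mod_cast h0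
        rw [H.commonFat_set] at h0'
        exact ⟨hadj, (Set.ncard_eq_zero (Set.toFinite _)).mp h0'⟩
      · exfalso
        rw [if_neg hadj] at h
        have hc : (0:ℝ) ≤ H.commonFat x z := Nat.cast_nonneg _
        linarith
    have hay : H.graph.Adj y z ∧ {f : V | H.IsFat f ∧ H.graph.Adj y f ∧ H.graph.Adj z f} = ∅ := by
      have hty : ⟪ψ y, ψ z⟫ = 1 := by rw [← hpsi]; exact ht
      have h := hpair y z hsy hz (Ne.symm hzy)
      rw [hty] at h
      by_cases hadj : H.graph.Adj y z
      · rw [if_pos hadj] at h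
        have h0 : (H.commonFat y z : ℝ) = 0 := by linarith
        have h0' : H.commonFat y z = 0 := by exact_mod_cast h0
        rw [H.commonFat_set] at h0'
        exact ⟨hadj, (Set.ncard_eq_zero (Set.toFinite _)).mp h0'⟩
      · exfalso
        rw [if_neg hadj] at h
        have hc : (0:ℝ) ≤ H.commonFat y z := Nat.cast_nonneg _
        linarith
    -- z vs z₁
    have htz : ⟪ψ z₁, ψ z⟫ = -1 := by rw [hpz₁, inner_neg_left, ht]
    have h := hpair z₁ z hsz₁ hz (Ne.symm hzz₁)
    rw [htz] at h
    by_cases hadj : H.graph.Adj z₁ z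
    · rw [if_pos hadj] at h
      have hc2 : H.commonFat z₁ z = 2 := by
        have h' : (H.commonFat z₁ z : ℝ) = 2 := by linarith
        exact_mod_cast h'
      have hsub : {f : V | H.IsFat f ∧ H.graph.Adj z₁ f ∧ H.graph.Adj z f}
          ⊆ {f : V | H.IsFat f ∧ H.graph.Adj z₁ f} := fun f hf => ⟨hf.1, hf.2.1⟩
      rw [hFsz₁] at hsub
      have heq : {f : V | H.IsFat f ∧ H.graph.Adj z₁ f ∧ H.graph.Adj z f} = {a₁, b₁} := by
        refine Set.eq_of_subset_of_ncard_le hsub ?_ (Set.toFinite _)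
        rw [Set.ncard_pair hab₁, ← H.commonFat_set, hc2]
      have ha₁mem : a₁ ∈ {f : V | H.IsFat f ∧ H.graph.Adj z₁ f ∧ H.graph.Adj z f} := by
        rw [heq]; simp
      have : a₁ ∈ ({} : Set V) := by
        rw [← hax.2]
        exact ⟨ha₁mem.1, ha₁.2.1, ha₁mem.2.2⟩
      exact this
    · rw [if_neg hadj] at h
      have hc1 : H.commonFat z₁ z = 1 := by
        have h' : (H.commonFat z₁ z : ℝ) = 1 := by linarith
        exact_mod_cast h'
      rw [H.commonFat_set] at hc1
      obtain ⟨g, hcg⟩ := Set.ncard_eq_one.mp hc1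
      have hg : H.IsFat g ∧ H.graph.Adj z₁ g ∧ H.graph.Adj z g := by
        have h' : g ∈ {f : V | H.IsFat f ∧ H.graph.Adj z₁ f ∧ H.graph.Adj z f} := by
          rw [hcg]; simp
        exact h'
      have hgmem : g ∈ ({a₁, b₁} : Set V) := by
        rw [← hFsz₁]
        exact ⟨hg.1, hg.2.1⟩
      rcases hgmem with rfl | rfl
      · have : g ∈ ({} : Set V) := by
          rw [← hax.2]; exact ⟨hg.1, ha₁.2.1, hg.2.2⟩
        exact this
      · have : g ∈ ({} : Set V) := by
          rw [← hay.2]; exact ⟨hg.1, hb₁.2.1, hg.2.2⟩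
        exact this
  -- the representation of each slim vertex is ±ψ x
  have hres : ∀ z, H.IsSlim z → ⟪ψ x, ψ z⟫ ≠ 0 → (ψ z = ψ x ∨ ψ z = -ψ x) := by
    intro z hz h0
    rcases htri z hz with ht | ht | ht
    · exact Or.inr (hF z hz ht).2.2.2.1
    · exact absurd ht h0
    · rcases hT1 z hz ht with rfl | rfl
      · exact Or.inl rfl
      · exact Or.inl hpsi.symm
  -- no slim vertex is orthogonal to ψ x
  have hT0 : ∀ z, H.IsSlim z → ⟪ψ x, ψ z⟫ = 0 → False := by
    intro z hz ht0
    apply hind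
    refine H.decomposable_of_split (fun v => ⟪ψ x, ψ v⟫ ≠ 0)
      ⟨x, hsx, by show ⟪ψ x, ψ x⟫ ≠ 0; rw [hu1]; norm_num⟩
      ⟨z, hz, by show ¬⟪ψ x, ψ z⟫ ≠ 0; simp [ht0]⟩ ?_ ?_
    · intro a b has hbs ha hb hab
      rw [not_not] at hb
      have hip : ⟪ψ a, ψ b⟫ = 0 := by
        rcases hres a has ha with h' | h'
        · rw [h']; exact hb
        · rw [h', inner_neg_left, hb, neg_zero]
      have h := hr2 a b has hbs hab
      rw [hip] at h
      have h' : (H.commonFat a b : ℝ) = 1 := by linarith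
      exact_mod_cast h'
    · intro a b has hbs ha hb hne hab
      rw [not_not] at hb
      have hip : ⟪ψ a, ψ b⟫ = 0 := by
        rcases hres a has ha with h' | h'
        · rw [h']; exact hb
        · rw [h', inner_neg_left, hb, neg_zero]
      have h := hr3 a b has hbs hne hab
      rw [hip] at h
      have h' : (H.commonFat a b : ℝ) = 0 := by linarith
      exact_mod_cast h'
  -- pairs of (-1)-vertices are adjacent without common fat neighbours
  have hNpair : ∀ z w, H.IsSlim z → H.IsSlim w → ⟪ψ x, ψ z⟫ = -1 → ⟪ψ x, ψ w⟫ = -1 →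
      z ≠ w → H.graph.Adj z w ∧ {f : V | H.IsFat f ∧ H.graph.Adj z f ∧ H.graph.Adj w f} = ∅ := by
    intro z w hz hw htz htw hzw
    have hip : ⟪ψ z, ψ w⟫ = 1 := by
      rw [(hF z hz htz).2.2.2.1, (hF w hw htw).2.2.2.1, inner_neg_neg, hu1]
    have h := hpair z w hz hw hzw
    rw [hip] at h
    by_cases hadj : H.graph.Adj z w
    · rw [if_pos hadj] at h
      have h0 : (H.commonFat z w : ℝ) = 0 := by linarith
      have h0' : H.commonFat z w = 0 := by exact_mod_cast h0
      rw [H.commonFat_set] at h0'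
      exact ⟨hadj, (Set.ncard_eq_zero (Set.toFinite _)).mp h0'⟩
    · exfalso
      rw [if_neg hadj] at h
      have hc : (0:ℝ) ≤ H.commonFat z w := Nat.cast_nonneg _
      linarith
  -- name the fat neighbours of x compatibly with z₁
  have hz₁x : z₁ ≠ x := by rintro rfl; rw [hu1] at htz₁; norm_num at htz₁
  have hz₁y : z₁ ≠ y := by rintro rfl; rw [hu1'] at htz₁; norm_num at htz₁
  have hFsx2 : {f : V | H.IsFat f ∧ H.graph.Adj x f}.ncard = 2 := by
    rw [← H.fatDeg_set]; exact hdx2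
  have hFsy2 : {f : V | H.IsFat f ∧ H.graph.Adj y f}.ncard = 2 := by
    rw [← H.fatDeg_set]; exact hdy2
  obtain ⟨f₁', f₂', hf12', hsetx'⟩ := Set.ncard_eq_two.mp hFsx2
  have ha₁x : a₁ ∈ {f : V | H.IsFat f ∧ H.graph.Adj x f} := ⟨ha₁.1, ha₁.2.1⟩
  have hswapx : ∃ f₂, a₁ ≠ f₂ ∧ {f : V | H.IsFat f ∧ H.graph.Adj x f} = {a₁, f₂} := by
    rw [hsetx'] at ha₁x
    rcases ha₁x with rfl | rfl
    · exact ⟨f₂', hf12', hsetx'⟩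
    · exact ⟨f₁', hf12'.symm, by rw [hsetx', Set.pair_comm]⟩
  obtain ⟨f₂, hf12, hsetx⟩ := hswapx
  obtain ⟨f₃', f₄', hf34', hsety'⟩ := Set.ncard_eq_two.mp hFsy2
  have hb₁y : b₁ ∈ {f : V | H.IsFat f ∧ H.graph.Adj y f} := ⟨hb₁.1, hb₁.2.1⟩
  have hswapy : ∃ f₄, b₁ ≠ f₄ ∧ {f : V | H.IsFat f ∧ H.graph.Adj y f} = {b₁, f₄} := by
    rw [hsety'] at hb₁y
    rcases hb₁y with rfl | rfl
    · exact ⟨f₄', hf34', hsety'⟩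
    · exact ⟨f₃', hf34'.symm, by rw [hsety', Set.pair_comm]⟩
  obtain ⟨f₄, hf34, hsety⟩ := hswapy
  have hf₂x : H.IsFat f₂ ∧ H.graph.Adj x f₂ := by
    have h' : f₂ ∈ {f : V | H.IsFat f ∧ H.graph.Adj x f} := by rw [hsetx]; simp
    exact h'
  have hf₄y : H.IsFat f₄ ∧ H.graph.Adj y f₄ := by
    have h' : f₄ ∈ {f : V | H.IsFat f ∧ H.graph.Adj y f} := by rw [hsety]; simp
    exact h'
  -- membership characterizations
  have hmemx : ∀ f, H.IsFat f → H.graph.Adj x f → f = a₁ ∨ f = f₂ := by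
    intro f hf ha
    have h' : f ∈ {f : V | H.IsFat f ∧ H.graph.Adj x f} := ⟨hf, ha⟩
    rw [hsetx] at h'
    exact h'
  have hmemy : ∀ f, H.IsFat f → H.graph.Adj y f → f = b₁ ∨ f = f₄ := by
    intro f hf ha
    have h' : f ∈ {f : V | H.IsFat f ∧ H.graph.Adj y f} := ⟨hf, ha⟩
    rw [hsety] at h'
    exact h'
  have hmemz₁ : ∀ f, H.IsFat f → H.graph.Adj z₁ f → f = a₁ ∨ f = b₁ := by
    intro f hf ha
    have h' : f ∈ {f : V | H.IsFat f ∧ H.graph.Adj z₁ f} := ⟨hf, ha⟩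
    rw [hFsz₁] at h'
    exact h'
  -- cross distinctness of fat vertices
  have ha₁b₁ : a₁ ≠ b₁ := hab₁
  have ha₁f₄ : a₁ ≠ f₄ := by
    rintro rfl; exact hcxy_set a₁ ⟨ha₁.1, ha₁.2.1, hf₄y.2⟩
  have hf₂b₁ : f₂ ≠ b₁ := by
    rintro rfl; exact hcxy_set f₂ ⟨hf₂x.1, hf₂x.2, hb₁.2.1⟩
  have hf₂f₄ : f₂ ≠ f₄ := by
    rintro rfl; exact hcxy_set f₂ ⟨hf₂x.1, hf₂x.2, hf₄y.2⟩
  -- negative slim-fat adjacencies around x, y, z₁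
  have nxb₁ : ¬ H.graph.Adj x b₁ := by
    intro h
    rcases hmemx b₁ hb₁.1 h with he | he
    · exact hab₁ he.symm
    · exact hf₂b₁ he.symm
  have nxf₄ : ¬ H.graph.Adj x f₄ := by
    intro h
    rcases hmemx f₄ hf₄y.1 h with he | he
    · exact ha₁f₄ he.symm
    · exact hf₂f₄ he.symm
  have nya₁ : ¬ H.graph.Adj y a₁ := by
    intro h
    rcases hmemy a₁ ha₁.1 h with he | he
    · exact hab₁ he
    · exact ha₁f₄ he
  have nyf₂ : ¬ H.graph.Adj y f₂ := by
    intro h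
    rcases hmemy f₂ hf₂x.1 h with he | he
    · exact hf₂b₁ he
    · exact hf₂f₄ he
  have nz₁f₂ : ¬ H.graph.Adj z₁ f₂ := by
    intro h
    rcases hmemz₁ f₂ hf₂x.1 h with he | he
    · exact hf12 he.symm
    · exact hf₂b₁ he
  have nz₁f₄ : ¬ H.graph.Adj z₁ f₄ := by
    intro h
    rcases hmemz₁ f₄ hf₄y.1 h with he | he
    · exact ha₁f₄ he.symm
    · exact hf34 he.symm
  -- fats are distinct from slims
  have fat_ne_slim : ∀ f v, H.IsFat f → H.IsSlim v → f ≠ v := by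
    rintro f v hf hv rfl; exact hv hf
  by_cases hz₂ex : ∃ w, H.IsSlim w ∧ ⟪ψ x, ψ w⟫ = -1 ∧ w ≠ z₁
  · -- two vertices with inner product -1 : the graph is all of 𝔎
    obtain ⟨z₂, hsz₂, htz₂, hz₂z₁⟩ := hz₂ex
    obtain ⟨hnxz₂, hnyz₂, hdz₂, hpz₂, a₂, b₂, hab₂, hca₂, hcb₂, hFsz₂⟩ := hF z₂ hsz₂ htz₂
    obtain ⟨hadj12, hcom12⟩ := hNpair z₁ z₂ hsz₁ hsz₂ htz₁ htz₂ (Ne.symm hz₂z₁)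
    have hz₂x : z₂ ≠ x := by rintro rfl; rw [hu1] at htz₂; norm_num at htz₂
    have hz₂y : z₂ ≠ y := by rintro rfl; rw [hu1'] at htz₂; norm_num at htz₂
    have ha₂ : H.IsFat a₂ ∧ H.graph.Adj x a₂ ∧ H.graph.Adj z₂ a₂ := by
      have h' : a₂ ∈ {f : V | H.IsFat f ∧ H.graph.Adj x f ∧ H.graph.Adj z₂ f} := by
        rw [hca₂]; simp
      exact h'
    have hb₂ : H.IsFat b₂ ∧ H.graph.Adj y b₂ ∧ H.graph.Adj z₂ b₂ := by
      have h' : b₂ ∈ {f : V | H.IsFat f ∧ H.graph.Adj y f ∧ H.graph.Adj z₂ f} := by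
        rw [hcb₂]; simp
      exact h'
    have hcom12' : ∀ f, ¬ (H.IsFat f ∧ H.graph.Adj z₁ f ∧ H.graph.Adj z₂ f) := by
      intro f hf
      have h' : f ∈ ({} : Set V) := by rw [← hcom12]; exact hf
      exact h'
    have ha₂f₂ : a₂ = f₂ := by
      rcases hmemx a₂ ha₂.1 ha₂.2.1 with he | he
      · exact absurd ⟨ha₂.1, by rw [he]; exact ha₁.2.2, ha₂.2.2⟩ (hcom12' a₂)
      · exact he
    have hb₂f₄ : b₂ = f₄ := by
      rcases hmemy b₂ hb₂.1 hb₂.2.1 with he | he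
      · exact absurd ⟨hb₂.1, by rw [he]; exact hb₁.2.2, hb₂.2.2⟩ (hcom12' b₂)
      · exact he
    rw [ha₂f₂] at ha₂ hFsz₂
    rw [hb₂f₄] at hb₂ hFsz₂
    have hmemz₂ : ∀ f, H.IsFat f → H.graph.Adj z₂ f → f = f₂ ∨ f = f₄ := by
      intro f hf ha
      have h' : f ∈ {f : V | H.IsFat f ∧ H.graph.Adj z₂ f} := ⟨hf, ha⟩
      rw [hFsz₂] at h'
      exact h'
    have nz₂a₁ : ¬ H.graph.Adj z₂ a₁ := by
      intro h
      rcases hmemz₂ a₁ ha₁.1 h with he | he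
      · exact hf12 he
      · exact ha₁f₄ he
    have nz₂b₁ : ¬ H.graph.Adj z₂ b₁ := by
      intro h
      rcases hmemz₂ b₁ hb₁.1 h with he | he
      · exact hf₂b₁ he.symm
      · exact hf34 he
    have hNuniq : ∀ w, H.IsSlim w → ⟪ψ x, ψ w⟫ = -1 → w = z₁ ∨ w = z₂ := by
      intro w hw htw
      by_contra hcon
      push_neg at hcon
      obtain ⟨hw1, hw2⟩ := hcon
      obtain ⟨-, -, -, -, aw, bw, habw, hcaw, hcbw, hFsw⟩ := hF w hw htw
      have haw : H.IsFat aw ∧ H.graph.Adj x aw ∧ H.graph.Adj w aw := by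
        have h' : aw ∈ {f : V | H.IsFat f ∧ H.graph.Adj x f ∧ H.graph.Adj w f} := by
          rw [hcaw]; simp
        exact h'
      obtain ⟨-, hcw1⟩ := hNpair z₁ w hsz₁ hw htz₁ htw (Ne.symm hw1)
      obtain ⟨-, hcw2⟩ := hNpair z₂ w hsz₂ hw htz₂ htw (Ne.symm hw2)
      rcases hmemx aw haw.1 haw.2.1 with he | he
      · have h' : aw ∈ ({} : Set V) := by
          rw [← hcw1]; exact ⟨haw.1, by rw [he]; exact ha₁.2.2, haw.2.2⟩
        exact h'
      · have h' : aw ∈ ({} : Set V) := by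
          rw [← hcw2]; exact ⟨haw.1, by rw [he]; exact ha₂.2.2, haw.2.2⟩
        exact h'
    have hclass : ∀ v : V,
        v = x ∨ v = y ∨ v = z₁ ∨ v = z₂ ∨ v = a₁ ∨ v = f₂ ∨ v = b₁ ∨ v = f₄ := by
      intro v
      by_cases hfv : H.IsFat v
      · obtain ⟨w, hw, hadjw⟩ := H.fat_slim_nbr hfv
        have hadj' : H.graph.Adj w v := hadjw.symm
        rcases htri w hw with ht | ht | ht
        · rcases hNuniq w hw ht with rfl | rfl
          · rcases hmemz₁ v hfv hadj' with rfl | rfl <;> simp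
          · rcases hmemz₂ v hfv hadj' with rfl | rfl <;> simp
        · exact (hT0 w hw ht).elim
        · rcases hT1 w hw ht with rfl | rfl
          · rcases hmemx v hfv hadj' with rfl | rfl <;> simp
          · rcases hmemy v hfv hadj' with rfl | rfl <;> simp
      · rcases htri v hfv with ht | ht | ht
        · rcases hNuniq v hfv ht with rfl | rfl <;> simp
        · exact (hT0 v hfv ht).elim
        · rcases hT1 v hfv ht with rfl | rfl <;> simp
    set e : V → (ZMod 4 ⊕ ZMod 4) := (fun v => if v = x then Sum.inl 0 else if v = y then Sum.inl 2
        else if v = z₁ then Sum.inl 1 else if v = z₂ then Sum.inl 3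
        else if v = a₁ then Sum.inr 0 else if v = f₂ then Sum.inr 3
        else if v = b₁ then Sum.inr 1 else Sum.inr 2) with he_def
    have he_x : e x = Sum.inl 0 := by simp [he_def]
    have he_y : e y = Sum.inl 2 := by
      simp [he_def, (Ne.symm hne_xy)]
    have he_z₁ : e z₁ = Sum.inl 1 := by
      simp [he_def, hz₁x, hz₁y]
    have he_z₂ : e z₂ = Sum.inl 3 := by
      simp [he_def, hz₂x, hz₂y, hz₂z₁]
    have he_a₁ : e a₁ = Sum.inr 0 := by
      simp [he_def, (fat_ne_slim a₁ x ha₁.1 hsx), (fat_ne_slim a₁ y ha₁.1 hsy), (fat_ne_slim a₁ z₁ ha₁.1 hsz₁), (fat_ne_slim a₁ z₂ ha₁.1 hsz₂)]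
    have he_f₂ : e f₂ = Sum.inr 3 := by
      simp [he_def, (fat_ne_slim f₂ x hf₂x.1 hsx), (fat_ne_slim f₂ y hf₂x.1 hsy), (fat_ne_slim f₂ z₁ hf₂x.1 hsz₁), (fat_ne_slim f₂ z₂ hf₂x.1 hsz₂), (Ne.symm hf12)]
    have he_b₁ : e b₁ = Sum.inr 1 := by
      simp [he_def, (fat_ne_slim b₁ x hb₁.1 hsx), (fat_ne_slim b₁ y hb₁.1 hsy), (fat_ne_slim b₁ z₁ hb₁.1 hsz₁), (fat_ne_slim b₁ z₂ hb₁.1 hsz₂), (Ne.symm hab₁), hf₂b₁.symm]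
    have he_f₄ : e f₄ = Sum.inr 2 := by
      simp [he_def, (fat_ne_slim f₄ x hf₄y.1 hsx), (fat_ne_slim f₄ y hf₄y.1 hsy), (fat_ne_slim f₄ z₁ hf₄y.1 hsz₁), (fat_ne_slim f₄ z₂ hf₄y.1 hsz₂), (Ne.symm ha₁f₄), (Ne.symm hf₂f₄), (Ne.symm hf34)]
    have hinj' : Function.Injective e := by
      intro u v huv
      rcases hclass u with rfl | rfl | rfl | rfl | rfl | rfl | rfl | rfl <;>
        rcases hclass v with rfl | rfl | rfl | rfl | rfl | rfl | rfl | rfl <;>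
        simp only [he_x, he_y, he_z₁, he_z₂, he_a₁, he_f₂, he_b₁, he_f₄] at huv ⊢ <;>
        first | rfl | exact absurd huv (by decide)
    refine ⟨⟨e, hinj'⟩, ?_, ?_⟩
    · intro u v
      rcases hclass u with rfl | rfl | rfl | rfl | rfl | rfl | rfl | rfl <;>
        rcases hclass v with rfl | rfl | rfl | rfl | rfl | rfl | rfl | rfl <;>
        simp only [Function.Embedding.coeFn_mk, he_x, he_y, he_z₁, he_z₂, he_a₁, he_f₂, he_b₁,
          he_f₄, HoffmanGraph.K_ll, HoffmanGraph.K_lr, HoffmanGraph.K_rl, HoffmanGraph.K_rr] <;>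
        (first
          | exact iff_of_true (by decide) (by first
              | exact hxy_adj | exact hxy_adj.symm | exact hadj12 | exact hadj12.symm
              | exact ha₁.2.1 | exact ha₁.2.1.symm | exact hf₂x.2 | exact hf₂x.2.symm
              | exact hb₁.2.1 | exact hb₁.2.1.symm | exact hf₄y.2 | exact hf₄y.2.symm
              | exact ha₁.2.2 | exact ha₁.2.2.symm | exact hb₁.2.2 | exact hb₁.2.2.symm
              | exact ha₂.2.2 | exact ha₂.2.2.symm | exact hb₂.2.2 | exact hb₂.2.2.symm)
          | exact iff_of_false (by decide) (by first
              | exact H.graph.loopless.irrefl _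
              | exact hnxz₁ | exact fun h => hnxz₁ h.symm
              | exact hnxz₂ | exact fun h => hnxz₂ h.symm
              | exact hnyz₁ | exact fun h => hnyz₁ h.symm
              | exact hnyz₂ | exact fun h => hnyz₂ h.symm
              | exact nxb₁ | exact fun h => nxb₁ h.symm
              | exact nxf₄ | exact fun h => nxf₄ h.symm
              | exact nya₁ | exact fun h => nya₁ h.symm
              | exact nyf₂ | exact fun h => nyf₂ h.symm
              | exact nz₁f₂ | exact fun h => nz₁f₂ h.symm
              | exact nz₁f₄ | exact fun h => nz₁f₄ h.symm
              | exact nz₂a₁ | exact fun h => nz₂a₁ h.symm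
              | exact nz₂b₁ | exact fun h => nz₂b₁ h.symm
              | exact H.fat_not_adj ha₁.1 hf₂x.1 | exact H.fat_not_adj hf₂x.1 ha₁.1
              | exact H.fat_not_adj ha₁.1 hb₁.1 | exact H.fat_not_adj hb₁.1 ha₁.1
              | exact H.fat_not_adj ha₁.1 hf₄y.1 | exact H.fat_not_adj hf₄y.1 ha₁.1
              | exact H.fat_not_adj hf₂x.1 hb₁.1 | exact H.fat_not_adj hb₁.1 hf₂x.1
              | exact H.fat_not_adj hf₂x.1 hf₄y.1 | exact H.fat_not_adj hf₄y.1 hf₂x.1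
              | exact H.fat_not_adj hb₁.1 hf₄y.1 | exact H.fat_not_adj hf₄y.1 hb₁.1))
    · intro v
      rcases hclass v with rfl | rfl | rfl | rfl | rfl | rfl | rfl | rfl <;>
        simp only [Function.Embedding.coeFn_mk, he_x, he_y, he_z₁, he_z₂, he_a₁, he_f₂, he_b₁,
          he_f₄, HoffmanGraph.K_fat_l, HoffmanGraph.K_fat_r, false_iff, true_iff] <;>
        (first
          | exact hsx | exact hsy | exact hsz₁ | exact hsz₂
          | exact ha₁.1 | exact hf₂x.1 | exact hb₁.1 | exact hf₄y.1)
  · -- only one vertex with inner product -1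
    push_neg at hz₂ex
    have hNuniq : ∀ w, H.IsSlim w → ⟪ψ x, ψ w⟫ = -1 → w = z₁ := fun w hw htw =>
      hz₂ex w hw htw
    have hclass : ∀ v : V,
        v = x ∨ v = y ∨ v = z₁ ∨ v = a₁ ∨ v = f₂ ∨ v = b₁ ∨ v = f₄ := by
      intro v
      by_cases hfv : H.IsFat v
      · obtain ⟨w, hw, hadjw⟩ := H.fat_slim_nbr hfv
        have hadj' : H.graph.Adj w v := hadjw.symm
        rcases htri w hw with ht | ht | ht
        · rcases hNuniq w hw ht with rfl
          rcases hmemz₁ v hfv hadj' with rfl | rfl <;> simp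
        · exact (hT0 w hw ht).elim
        · rcases hT1 w hw ht with rfl | rfl
          · rcases hmemx v hfv hadj' with rfl | rfl <;> simp
          · rcases hmemy v hfv hadj' with rfl | rfl <;> simp
      · rcases htri v hfv with ht | ht | ht
        · rcases hNuniq v hfv ht with rfl; simp
        · exact (hT0 v hfv ht).elim
        · rcases hT1 v hfv ht with rfl | rfl <;> simp
    set e : V → (ZMod 4 ⊕ ZMod 4) := (fun v => if v = x then Sum.inl 0 else if v = y then Sum.inl 2
        else if v = z₁ then Sum.inl 1
        else if v = a₁ then Sum.inr 0 else if v = f₂ then Sum.inr 3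
        else if v = b₁ then Sum.inr 1 else Sum.inr 2) with he_def
    have he_x : e x = Sum.inl 0 := by simp [he_def]
    have he_y : e y = Sum.inl 2 := by
      simp [he_def, (Ne.symm hne_xy)]
    have he_z₁ : e z₁ = Sum.inl 1 := by
      simp [he_def, hz₁x, hz₁y]
    have he_a₁ : e a₁ = Sum.inr 0 := by
      simp [he_def, (fat_ne_slim a₁ x ha₁.1 hsx), (fat_ne_slim a₁ y ha₁.1 hsy), (fat_ne_slim a₁ z₁ ha₁.1 hsz₁)]
    have he_f₂ : e f₂ = Sum.inr 3 := by
      simp [he_def, (fat_ne_slim f₂ x hf₂x.1 hsx), (fat_ne_slim f₂ y hf₂x.1 hsy), (fat_ne_slim f₂ z₁ hf₂x.1 hsz₁), (Ne.symm hf12)]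
    have he_b₁ : e b₁ = Sum.inr 1 := by
      simp [he_def, (fat_ne_slim b₁ x hb₁.1 hsx), (fat_ne_slim b₁ y hb₁.1 hsy), (fat_ne_slim b₁ z₁ hb₁.1 hsz₁), (Ne.symm hab₁), hf₂b₁.symm]
    have he_f₄ : e f₄ = Sum.inr 2 := by
      simp [he_def, (fat_ne_slim f₄ x hf₄y.1 hsx), (fat_ne_slim f₄ y hf₄y.1 hsy), (fat_ne_slim f₄ z₁ hf₄y.1 hsz₁), (Ne.symm ha₁f₄), (Ne.symm hf₂f₄), (Ne.symm hf34)]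
    have hinj' : Function.Injective e := by
      intro u v huv
      rcases hclass u with rfl | rfl | rfl | rfl | rfl | rfl | rfl <;>
        rcases hclass v with rfl | rfl | rfl | rfl | rfl | rfl | rfl <;>
        simp only [he_x, he_y, he_z₁, he_a₁, he_f₂, he_b₁, he_f₄] at huv ⊢ <;>
        first | rfl | exact absurd huv (by decide)
    refine ⟨⟨e, hinj'⟩, ?_, ?_⟩
    · intro u v
      rcases hclass u with rfl | rfl | rfl | rfl | rfl | rfl | rfl <;>
        rcases hclass v with rfl | rfl | rfl | rfl | rfl | rfl | rfl <;>
        simp only [Function.Embedding.coeFn_mk, he_x, he_y, he_z₁, he_a₁, he_f₂, he_b₁,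
          he_f₄, HoffmanGraph.K_ll, HoffmanGraph.K_lr, HoffmanGraph.K_rl, HoffmanGraph.K_rr] <;>
        (first
          | exact iff_of_true (by decide) (by first
              | exact hxy_adj | exact hxy_adj.symm
              | exact ha₁.2.1 | exact ha₁.2.1.symm | exact hf₂x.2 | exact hf₂x.2.symm
              | exact hb₁.2.1 | exact hb₁.2.1.symm | exact hf₄y.2 | exact hf₄y.2.symm
              | exact ha₁.2.2 | exact ha₁.2.2.symm | exact hb₁.2.2 | exact hb₁.2.2.symm)
          | exact iff_of_false (by decide) (by first
              | exact H.graph.loopless.irrefl _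
              | exact hnxz₁ | exact fun h => hnxz₁ h.symm
              | exact hnyz₁ | exact fun h => hnyz₁ h.symm
              | exact nxb₁ | exact fun h => nxb₁ h.symm
              | exact nxf₄ | exact fun h => nxf₄ h.symm
              | exact nya₁ | exact fun h => nya₁ h.symm
              | exact nyf₂ | exact fun h => nyf₂ h.symm
              | exact nz₁f₂ | exact fun h => nz₁f₂ h.symm
              | exact nz₁f₄ | exact fun h => nz₁f₄ h.symm
              | exact H.fat_not_adj ha₁.1 hf₂x.1 | exact H.fat_not_adj hf₂x.1 ha₁.1
              | exact H.fat_not_adj ha₁.1 hb₁.1 | exact H.fat_not_adj hb₁.1 ha₁.1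
              | exact H.fat_not_adj ha₁.1 hf₄y.1 | exact H.fat_not_adj hf₄y.1 ha₁.1
              | exact H.fat_not_adj hf₂x.1 hb₁.1 | exact H.fat_not_adj hb₁.1 hf₂x.1
              | exact H.fat_not_adj hf₂x.1 hf₄y.1 | exact H.fat_not_adj hf₄y.1 hf₂x.1
              | exact H.fat_not_adj hb₁.1 hf₄y.1 | exact H.fat_not_adj hf₄y.1 hb₁.1))
    · intro v
      rcases hclass v with rfl | rfl | rfl | rfl | rfl | rfl | rfl <;>
        simp only [Function.Embedding.coeFn_mk, he_x, he_y, he_z₁, he_a₁, he_f₂, he_b₁,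
          he_f₄, HoffmanGraph.K_fat_l, HoffmanGraph.K_fat_r, false_iff, true_iff] <;>
        (first
          | exact hsx | exact hsy | exact hsz₁
          | exact ha₁.1 | exact hf₂x.1 | exact hb₁.1 | exact hf₄y.1)
end
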